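/- arXiv:math/0503007 — 2 statements merged into one kernel-verified Lean document; each statement's English description precedes it below -/
import Mathlib

section
/- In the symmetric group S_n with Coxeter element the n-cycle γ = (1, 2, ..., n), any total order on transpositions satisfying (i,j) < (i,k) < (j,k) for all 1 ≤ i < j < k ≤ n (e.g., the lexicographic order) makes the natural edge labeling λ(u,v) = u⁻¹v of the interval [1, γ] in absolute order an EL-labeling. -/
noncomputable section

/-- Reflection length in the symmetric group: the least number of transpositions
whose product is `w`. -/
def permRefLen {n : ℕ} (w : Equiv.Perm (Fin n)) : ℕ :=
  sInf {k | ∃ l : List (Equiv.Perm (Fin n)),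
    l.length = k ∧ (∀ t ∈ l, t.IsSwap) ∧ l.prod = w}

/-- The absolute order on the symmetric group. -/
def permAbsLe {n : ℕ} (u v : Equiv.Perm (Fin n)) : Prop :=
  permRefLen u + permRefLen (u⁻¹ * v) = permRefLen v

/-- Covering relation of the absolute order on the symmetric group. -/
def permCovers {n : ℕ} (u v : Equiv.Perm (Fin n)) : Prop :=
  permAbsLe u v ∧ u ≠ v ∧ ∀ z, permAbsLe u z → permAbsLe z v → z = u ∨ z = v

/-- `l` is a maximal (saturated) chain from `u` to `v` in absolute order. -/
def permMaxChain {n : ℕ} (u v : Equiv.Perm (Fin n))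
    (l : List (Equiv.Perm (Fin n))) : Prop :=
  l.head? = some u ∧ l.getLast? = some v ∧ l.Chain' permCovers

/-- The label of a chain under the natural edge labeling `λ (x, y) = x⁻¹ * y`. -/
def permLabels {n : ℕ} (l : List (Equiv.Perm (Fin n))) : List (Equiv.Perm (Fin n)) :=
  l.zipWith (fun x y => x⁻¹ * y) l.tail

namespace EL18
open Equiv Equiv.Perm List

variable {n : ℕ}

local notation "SP" => Equiv.Perm (Fin n)

lemma exists_min_fact (w : SP) : ∃ l : List SP,
    l.length = permRefLen w ∧ (∀ t ∈ l, t.IsSwap) ∧ l.prod = w := by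
  have hne : {k | ∃ l : List SP,
      l.length = k ∧ (∀ t ∈ l, t.IsSwap) ∧ l.prod = w}.Nonempty := by
    obtain ⟨l, hp, hs⟩ := (Equiv.Perm.truncSwapFactors w).out
    exact ⟨l.length, l, rfl, hs, hp⟩
  exact Nat.sInf_mem hne

lemma len_le {w : SP} {l : List SP} (hs : ∀ t ∈ l, t.IsSwap) (hp : l.prod = w) :
    permRefLen w ≤ l.length :=
  Nat.sInf_le ⟨l, rfl, hs, hp⟩

@[simp] lemma len_one : permRefLen (1 : SP) = 0 :=
  Nat.le_zero.1 (len_le (l := []) (by simp) (by simp))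

lemma eq_one_of_len_zero {w : SP} (h : permRefLen w = 0) : w = 1 := by
  obtain ⟨l, hl, hs, hp⟩ := exists_min_fact w
  rw [h, List.length_eq_zero_iff] at hl
  simp [hl] at hp; exact hp.symm

lemma len_mul_le (x y : SP) : permRefLen (x * y) ≤ permRefLen x + permRefLen y := by
  obtain ⟨lx, hlx, hsx, hpx⟩ := exists_min_fact x
  obtain ⟨ly, hly, hsy, hpy⟩ := exists_min_fact y
  calc permRefLen (x * y) ≤ (lx ++ ly).length := by
        refine len_le ?_ (by simp [hpx, hpy])
        intro t ht; rcases List.mem_append.1 ht with h | h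
        exacts [hsx t h, hsy t h]
    _ = _ := by simp [hlx, hly]

lemma len_inv_le (x : SP) : permRefLen x⁻¹ ≤ permRefLen x := by
  obtain ⟨l, hl, hs, hp⟩ := exists_min_fact x
  have : permRefLen x⁻¹ ≤ ((l.map fun t => t⁻¹).reverse).length := by
    refine len_le ?_ (by rw [← List.prod_inv_reverse, hp])
    intro t ht
    simp only [List.mem_reverse, List.mem_map] at ht
    obtain ⟨s, hsl, rfl⟩ := ht
    obtain ⟨a, b, hab, rfl⟩ := hs s hsl
    exact ⟨a, b, hab, by rw [Equiv.swap_inv]⟩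
  simpa [hl] using this

lemma len_inv (x : SP) : permRefLen x⁻¹ = permRefLen x :=
  le_antisymm (len_inv_le x) (by simpa using len_inv_le x⁻¹)

lemma isSwap_conj {g t : SP} (h : t.IsSwap) : (g * t * g⁻¹).IsSwap := by
  obtain ⟨a, b, hab, rfl⟩ := h
  exact ⟨g a, g b, fun hc => hab (g.injective hc), (Equiv.swap_apply_apply g a b).symm⟩

lemma len_conj_le (g x : SP) : permRefLen (g * x * g⁻¹) ≤ permRefLen x := by
  obtain ⟨l, hl, hs, hp⟩ := exists_min_fact x
  have hprod : (l.map fun t => g * t * g⁻¹).prod = g * x * g⁻¹ := by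
    rw [← hp]; clear hp hl hs
    induction l with
    | nil => simp
    | cons a l ih => simp [ih]
  have : permRefLen (g * x * g⁻¹) ≤ (l.map fun t => g * t * g⁻¹).length := by
    refine len_le ?_ hprod
    intro t ht
    simp only [List.mem_map] at ht
    obtain ⟨s, hsl, rfl⟩ := ht
    exact isSwap_conj (hs s hsl)
  simpa [hl] using this

lemma len_conj (g x : SP) : permRefLen (g * x * g⁻¹) = permRefLen x := by
  refine le_antisymm (len_conj_le g x) ?_
  have := len_conj_le g⁻¹ (g * x * g⁻¹)
  simpa [mul_assoc] using this

lemma len_swap {t : SP} (h : t.IsSwap) : permRefLen t = 1 := by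
  obtain ⟨a, b, hab, rfl⟩ := h
  refine le_antisymm (by simpa using len_le (l := [Equiv.swap a b]) (by simp; exact ⟨a,b,hab,rfl⟩) (by simp)) ?_
  by_contra hlt
  push_neg at hlt
  have h0 : permRefLen (Equiv.swap a b) = 0 := by omega
  have := eq_one_of_len_zero h0
  exact hab (Equiv.swap_eq_one_iff.1 this)


open scoped Classical

/-- `x` is the minimum of its cycle. -/
def OrbMin (w : SP) (x : Fin n) : Prop := ∀ y, w.SameCycle x y → x ≤ y

/-- number of cycles (including fixed points) -/
noncomputable def cnt (w : SP) : ℕ := (Finset.univ.filter (OrbMin w)).card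

lemma cnt_one : cnt (1 : SP) = n := by
  unfold cnt
  rw [Finset.filter_true_of_mem, Finset.card_univ, Fintype.card_fin]
  intro x _ y hy
  rw [Equiv.Perm.sameCycle_one] at hy
  exact le_of_eq hy

lemma cnt_le (w : SP) : cnt w ≤ n := by
  calc cnt w ≤ Finset.univ.card := Finset.card_filter_le _ _
    _ = n := by rw [Finset.card_univ, Fintype.card_fin]

lemma sc_nat {w : SP} {x y : Fin n} (h : w.SameCycle x y) : ∃ i : ℕ, (w ^ i) x = y := by
  obtain ⟨i, _, h⟩ := h.exists_pow_eq'
  exact ⟨i, h⟩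

/-- least positive period of `a` under `w` -/
noncomputable def per (w : SP) (a : Fin n) : ℕ := sInf {k | 0 < k ∧ (w ^ k) a = a}

lemma per_mem (w : SP) (a : Fin n) : 0 < per w a ∧ (w ^ per w a) a = a :=
  (Nat.sInf_mem (⟨orderOf w, orderOf_pos w, by rw [pow_orderOf_eq_one]; rfl⟩ :
    {k | 0 < k ∧ (w ^ k) a = a}.Nonempty) : per w a ∈ {k | 0 < k ∧ (w ^ k) a = a})

lemma per_pos (w : SP) (a : Fin n) : 0 < per w a := (per_mem w a).1
lemma per_apply (w : SP) (a : Fin n) : (w ^ per w a) a = a := (per_mem w a).2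
lemma pow_ne_self {w : SP} {a : Fin n} {k : ℕ} (h0 : 0 < k) (hk : k < per w a) :
    (w ^ k) a ≠ a := fun hc => Nat.notMem_of_lt_sInf hk ⟨h0, hc⟩

lemma pow_per_mul (w : SP) (a : Fin n) (q : ℕ) : (w ^ (per w a * q)) a = a := by
  induction q with
  | zero => simp
  | succ q ih =>
    have : per w a * (q + 1) = per w a * q + per w a := by ring
    rw [this, pow_add, Equiv.Perm.mul_apply, per_apply, ih]

lemma pow_mod_per (w : SP) (a : Fin n) (i : ℕ) :
    (w ^ (i % per w a)) a = (w ^ i) a := by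
  conv_rhs => rw [← Nat.div_add_mod i (per w a)]
  rw [add_comm, pow_add, Equiv.Perm.mul_apply, pow_per_mul]

lemma exists_idx {w : SP} {a x : Fin n} (h : w.SameCycle a x) :
    ∃ i, i < per w a ∧ (w ^ i) a = x := by
  obtain ⟨i, hi⟩ := sc_nat h
  exact ⟨i % per w a, Nat.mod_lt _ (per_pos w a), by rw [pow_mod_per, hi]⟩

lemma idx_inj {w : SP} {a : Fin n} {i j : ℕ} (hi : i < per w a) (hj : j < per w a)
    (h : (w ^ i) a = (w ^ j) a) : i = j := by
  wlog hle : i ≤ j generalizing i j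
  · exact (this hj hi h.symm (le_of_not_ge hle)).symm
  by_contra hne
  have hji : 0 < j - i := by omega
  have : (w ^ (j - i)) a = a := by
    have key : (w ^ i) ((w ^ (j - i)) a) = (w ^ i) a := by
      rw [← Equiv.Perm.mul_apply, ← pow_add]
      have e : i + (j - i) = j := by omega
      rw [e, ← h]
    exact (w ^ i).injective key
  exact pow_ne_self hji (by omega) this

/-- least positive `k` with `(w^k) a = b` -/
noncomputable def dd (w : SP) (a b : Fin n) : ℕ := sInf {k | 0 < k ∧ (w ^ k) a = b}

section Split

lemma dd_mem {w : SP} {a b : Fin n} (hab : a ≠ b) (hsc : w.SameCycle a b) :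
    0 < dd w a b ∧ (w ^ dd w a b) a = b := by
  obtain ⟨i, hi⟩ := sc_nat hsc
  have hipos : 0 < i := by
    rcases Nat.eq_zero_or_pos i with h | h
    · exfalso; apply hab; rw [← hi, h]; simp
    · exact h
  exact (Nat.sInf_mem (⟨i, hipos, hi⟩ : {k | 0 < k ∧ (w ^ k) a = b}.Nonempty) :
    dd w a b ∈ {k | 0 < k ∧ (w ^ k) a = b})

lemma pow_ne_b {w : SP} {a b : Fin n} (hab : a ≠ b) (hsc : w.SameCycle a b) {k : ℕ}
    (hk : k < dd w a b) (h0 : 0 < k) : (w ^ k) a ≠ b := fun hc =>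
  Nat.notMem_of_lt_sInf hk ⟨h0, hc⟩

lemma dd_lt_per {w : SP} {a b : Fin n} (hab : a ≠ b) (hsc : w.SameCycle a b) : dd w a b < per w a := by
  rcases lt_or_ge (dd w a b) (per w a) with h | h
  · exact h
  exfalso
  have hd := dd_mem hab hsc
  have hdm : (w ^ (dd w a b - per w a)) a = b := by
    have key : (w ^ (dd w a b - per w a)) ((w ^ per w a) a) = b := by
      rw [← Equiv.Perm.mul_apply, ← pow_add]
      have e : dd w a b - per w a + per w a = dd w a b := by omega
      rw [e]; exact hd.2
    rwa [per_apply] at key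
  have hpos : 0 < dd w a b - per w a := by
    rcases Nat.eq_zero_or_pos (dd w a b - per w a) with h0 | h0
    · exfalso; apply hab
      rw [← hdm, h0]; simp
    · exact h0
  exact pow_ne_b hab hsc (by have := per_pos w a; omega) hpos hdm

/-- the arc from `a` (inclusive) to `b` (exclusive) -/
def A1 (w : SP) (a b : Fin n) (x : Fin n) : Prop :=
  ∃ i, i < dd w a b ∧ (w ^ i) a = x

/-- the arc from `b` (inclusive) back to `a` (exclusive) -/
def A2 (w : SP) (a b : Fin n) (x : Fin n) : Prop :=
  ∃ i, dd w a b ≤ i ∧ i < per w a ∧ (w ^ i) a = x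

lemma A1_a {w : SP} {a b : Fin n} (hab : a ≠ b) (hsc : w.SameCycle a b) : A1 w a b a :=
  ⟨0, (dd_mem hab hsc).1, by simp⟩

lemma A2_b {w : SP} {a b : Fin n} (hab : a ≠ b) (hsc : w.SameCycle a b) : A2 w a b b :=
  ⟨dd w a b, le_refl _, dd_lt_per hab hsc, (dd_mem hab hsc).2⟩

lemma A1_sc {w : SP} {a b : Fin n} {x : Fin n} (h : A1 w a b x) : w.SameCycle a x := by
  obtain ⟨i, _, rfl⟩ := h; exact ⟨i, by rw [zpow_natCast]⟩

lemma A2_sc {w : SP} {a b : Fin n} {x : Fin n} (h : A2 w a b x) : w.SameCycle a x := by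
  obtain ⟨i, _, _, rfl⟩ := h; exact ⟨i, by rw [zpow_natCast]⟩

lemma A1_or_A2 {w : SP} {a b : Fin n} (hab : a ≠ b) (hsc : w.SameCycle a b) {x : Fin n}
    (h : w.SameCycle a x) : A1 w a b x ∨ A2 w a b x := by
  obtain ⟨i, hi, rfl⟩ := exists_idx h
  rcases lt_or_ge i (dd w a b) with h' | h'
  · exact Or.inl ⟨i, h', rfl⟩
  · exact Or.inr ⟨i, h', hi, rfl⟩

lemma A1_A2_disj {w : SP} {a b : Fin n} (hab : a ≠ b) (hsc : w.SameCycle a b) {x : Fin n}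
    (h1 : A1 w a b x) (h2 : A2 w a b x) : False := by
  obtain ⟨i, hi, hx⟩ := h1
  obtain ⟨j, hj1, hj2, hy⟩ := h2
  have : i = j := idx_inj (lt_trans hi (dd_lt_per hab hsc)) hj2 (by rw [hx, hy])
  omega

lemma step_out {w : SP} {a b : Fin n} (hsc : w.SameCycle a b) {x : Fin n} (hx : ¬ w.SameCycle a x) :
    (Equiv.swap a b * w) x = w x ∧ ¬ w.SameCycle a (w x) := by
  have h2 : ¬ w.SameCycle a (w x) := fun hc =>
    hx (Equiv.Perm.sameCycle_apply_right.1 hc)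
  refine ⟨?_, h2⟩
  rw [Equiv.Perm.mul_apply]
  apply Equiv.swap_apply_of_ne_of_ne
  · intro hc; exact h2 (hc ▸ Equiv.Perm.SameCycle.refl w a)
  · intro hc; exact h2 (hc ▸ hsc)

end Split

section Step

lemma pow_succ_apply {w : SP} (i : ℕ) (x : Fin n) :
    (w ^ (i + 1)) x = w ((w ^ i) x) := by
  rw [pow_succ', Equiv.Perm.mul_apply]

lemma step_A1 {w : SP} {a b : Fin n} (hab : a ≠ b) (hsc : w.SameCycle a b) {x : Fin n}
    (h : A1 w a b x) : A1 w a b ((Equiv.swap a b * w) x) := by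
  obtain ⟨i, hi, rfl⟩ := h
  have hd := dd_mem hab hsc
  have hdp := dd_lt_per hab hsc
  rw [Equiv.Perm.mul_apply, ← pow_succ_apply]
  by_cases hcase : i + 1 = dd w a b
  · rw [hcase, hd.2, Equiv.swap_apply_right]
    exact A1_a hab hsc
  · have hlt : i + 1 < dd w a b := by omega
    have hne_a : (w ^ (i+1)) a ≠ a := pow_ne_self (by omega) (by omega)
    have hne_b : (w ^ (i+1)) a ≠ b := pow_ne_b hab hsc hlt (by omega)
    rw [Equiv.swap_apply_of_ne_of_ne hne_a hne_b]
    exact ⟨i+1, hlt, rfl⟩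

lemma step_A2 {w : SP} {a b : Fin n} (hab : a ≠ b) (hsc : w.SameCycle a b) {x : Fin n}
    (h : A2 w a b x) : A2 w a b ((Equiv.swap a b * w) x) := by
  obtain ⟨i, hdle, hi, rfl⟩ := h
  have hd := dd_mem hab hsc
  have hdp := dd_lt_per hab hsc
  rw [Equiv.Perm.mul_apply, ← pow_succ_apply]
  by_cases hcase : i + 1 = per w a
  · rw [hcase, per_apply, Equiv.swap_apply_left]
    exact A2_b hab hsc
  · have hlt : i + 1 < per w a := by omega
    have hne_a : (w ^ (i+1)) a ≠ a := pow_ne_self (by omega) hlt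
    have hne_b : (w ^ (i+1)) a ≠ b := by
      intro hc
      have := idx_inj hlt hdp (hc.trans hd.2.symm)
      omega
    rw [Equiv.swap_apply_of_ne_of_ne hne_a hne_b]
    exact ⟨i+1, by omega, hlt, rfl⟩

lemma cyc_pow_A1 {w : SP} {a b : Fin n} (hab : a ≠ b) (hsc : w.SameCycle a b) :
    ∀ i, i < dd w a b → ((Equiv.swap a b * w) ^ i) a = (w ^ i) a := by
  intro i
  induction i with
  | zero => simp
  | succ i ih =>
    intro hi
    have hdp := dd_lt_per hab hsc
    rw [pow_succ_apply, ih (by omega), Equiv.Perm.mul_apply, ← pow_succ_apply]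
    have hne_a : (w ^ (i+1)) a ≠ a := pow_ne_self (by omega) (by omega)
    have hne_b : (w ^ (i+1)) a ≠ b := pow_ne_b hab hsc hi (by omega)
    exact Equiv.swap_apply_of_ne_of_ne hne_a hne_b

lemma cyc_A1 {w : SP} {a b : Fin n} (hab : a ≠ b) (hsc : w.SameCycle a b) {x : Fin n}
    (h : A1 w a b x) : (Equiv.swap a b * w).SameCycle a x := by
  obtain ⟨i, hi, rfl⟩ := h
  exact ⟨i, by rw [zpow_natCast, cyc_pow_A1 hab hsc i hi]⟩

lemma cyc_pow_A2 {w : SP} {a b : Fin n} (hab : a ≠ b) (hsc : w.SameCycle a b) :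
    ∀ j, dd w a b + j < per w a → ((Equiv.swap a b * w) ^ j) b = (w ^ (dd w a b + j)) a := by
  intro j
  induction j with
  | zero => intro _; simpa using (dd_mem hab hsc).2.symm
  | succ j ih =>
    intro hj
    have hdp := dd_lt_per hab hsc
    have hd := dd_mem hab hsc
    rw [pow_succ_apply, ih (by omega), Equiv.Perm.mul_apply, ← pow_succ_apply]
    have e : dd w a b + (j + 1) = dd w a b + j + 1 := by omega
    rw [e]
    have hne_a : (w ^ (dd w a b + j + 1)) a ≠ a := pow_ne_self (by omega) (by omega)
    have hne_b : (w ^ (dd w a b + j + 1)) a ≠ b := by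
      intro hc
      have := idx_inj (by omega) hdp (hc.trans hd.2.symm)
      omega
    exact Equiv.swap_apply_of_ne_of_ne hne_a hne_b

lemma cyc_A2 {w : SP} {a b : Fin n} (hab : a ≠ b) (hsc : w.SameCycle a b) {x : Fin n}
    (h : A2 w a b x) : (Equiv.swap a b * w).SameCycle b x := by
  obtain ⟨i, hdle, hi, rfl⟩ := h
  refine ⟨(i - dd w a b : ℕ), ?_⟩
  rw [zpow_natCast, cyc_pow_A2 hab hsc _ (by omega)]
  have e : dd w a b + (i - dd w a b) = i := by omega
  rw [e]

lemma cyc_out {w : SP} {a b : Fin n} (hsc : w.SameCycle a b) {x y : Fin n}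
    (hx : ¬ w.SameCycle a x) (h : w.SameCycle x y) :
    (Equiv.swap a b * w).SameCycle x y := by
  obtain ⟨k, hk⟩ := sc_nat h
  have key : ∀ i, ((Equiv.swap a b * w) ^ i) x = (w ^ i) x ∧ ¬ w.SameCycle a ((w ^ i) x) := by
    intro i
    induction i with
    | zero => exact ⟨rfl, hx⟩
    | succ i ih =>
      rw [pow_succ_apply, pow_succ_apply, ih.1, Equiv.Perm.mul_apply]
      have hso := step_out hsc ih.2
      rw [Equiv.Perm.mul_apply] at hso
      exact ⟨hso.1, hso.2⟩
  exact ⟨k, by rw [zpow_natCast, (key k).1, hk]⟩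

lemma iter_class {w : SP} {a b : Fin n} (hab : a ≠ b) (hsc : w.SameCycle a b) :
    ∀ (k : ℕ) (x : Fin n),
      (A1 w a b x → A1 w a b (((Equiv.swap a b * w) ^ k) x)) ∧
      (A2 w a b x → A2 w a b (((Equiv.swap a b * w) ^ k) x)) ∧
      (¬ w.SameCycle a x → ¬ w.SameCycle a (((Equiv.swap a b * w) ^ k) x) ∧
        ((Equiv.swap a b * w) ^ k) x = (w ^ k) x) := by
  intro k
  induction k with
  | zero => exact fun x => ⟨fun h => h, fun h => h, fun h => ⟨h, rfl⟩⟩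
  | succ k ih =>
    intro x
    refine ⟨?_, ?_, ?_⟩
    · intro h
      rw [pow_succ_apply]
      exact step_A1 hab hsc ((ih x).1 h)
    · intro h
      rw [pow_succ_apply]
      exact step_A2 hab hsc ((ih x).2.1 h)
    · intro h
      obtain ⟨hna, heq⟩ := (ih x).2.2 h
      rw [pow_succ_apply, heq, pow_succ_apply]
      rw [heq] at hna
      have hso := step_out hsc hna
      rw [hso.1]
      exact ⟨hso.2, rfl⟩

lemma split_classify {w : SP} {a b : Fin n} (hab : a ≠ b) (hsc : w.SameCycle a b)
    {x y : Fin n} (h : (Equiv.swap a b * w).SameCycle x y) :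
    (¬ w.SameCycle a x ∧ w.SameCycle x y) ∨
    (A1 w a b x ∧ A1 w a b y) ∨ (A2 w a b x ∧ A2 w a b y) := by
  obtain ⟨k, hk⟩ := sc_nat h
  by_cases hax : w.SameCycle a x
  · rcases A1_or_A2 hab hsc hax with h1 | h2
    · exact Or.inr (Or.inl ⟨h1, hk ▸ (iter_class hab hsc k x).1 h1⟩)
    · exact Or.inr (Or.inr ⟨h2, hk ▸ (iter_class hab hsc k x).2.1 h2⟩)
  · have h3 := (iter_class hab hsc k x).2.2 hax
    refine Or.inl ⟨hax, ⟨k, ?_⟩⟩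
    rw [zpow_natCast, ← h3.2, hk]

end Step

section Cnt

lemma split_cnt {w : SP} {a b : Fin n} (hab : a ≠ b) (hsc : w.SameCycle a b) :
    cnt (Equiv.swap a b * w) = cnt w + 1 := by
  set w' := Equiv.swap a b * w with hw'
  have hF1ne : (Finset.univ.filter (A1 w a b)).Nonempty :=
    ⟨a, Finset.mem_filter.2 ⟨Finset.mem_univ _, A1_a hab hsc⟩⟩
  have hF2ne : (Finset.univ.filter (A2 w a b)).Nonempty :=
    ⟨b, Finset.mem_filter.2 ⟨Finset.mem_univ _, A2_b hab hsc⟩⟩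
  set α := (Finset.univ.filter (A1 w a b)).min' hF1ne with hαdef
  set β := (Finset.univ.filter (A2 w a b)).min' hF2ne with hβdef
  have hαA1 : A1 w a b α :=
    (Finset.mem_filter.1 ((Finset.univ.filter (A1 w a b)).min'_mem hF1ne)).2
  have hβA2 : A2 w a b β :=
    (Finset.mem_filter.1 ((Finset.univ.filter (A2 w a b)).min'_mem hF2ne)).2
  have hαle : ∀ z, A1 w a b z → α ≤ z := fun z hz =>
    Finset.min'_le _ _ (Finset.mem_filter.2 ⟨Finset.mem_univ _, hz⟩)
  have hβle : ∀ z, A2 w a b z → β ≤ z := fun z hz =>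
    Finset.min'_le _ _ (Finset.mem_filter.2 ⟨Finset.mem_univ _, hz⟩)
  have hαβ : α ≠ β := fun hc => A1_A2_disj hab hsc hαA1 (hc ▸ hβA2)
  have homα : OrbMin w' α := by
    intro y hy
    rcases split_classify hab hsc hy with ⟨hout, -⟩ | ⟨-, h1⟩ | ⟨h2, -⟩
    · exact absurd (A1_sc hαA1) hout
    · exact hαle y h1
    · exact absurd h2 (fun h => A1_A2_disj hab hsc hαA1 h)
  have homβ : OrbMin w' β := by
    intro y hy
    rcases split_classify hab hsc hy with ⟨hout, -⟩ | ⟨h1, -⟩ | ⟨-, h2⟩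
    · exact absurd (A2_sc hβA2) hout
    · exact absurd h1 (fun h => A1_A2_disj hab hsc h hβA2)
    · exact hβle y h2
  have homout : ∀ x, ¬ w.SameCycle a x → (OrbMin w' x ↔ OrbMin w x) := by
    intro x hx
    constructor
    · intro hm y hy
      exact hm y (cyc_out hsc hx hy)
    · intro hm y hy
      rcases split_classify hab hsc hy with ⟨-, h⟩ | ⟨h1, -⟩ | ⟨h2, -⟩
      · exact hm y h
      · exact absurd (A1_sc h1) hx
      · exact absurd (A2_sc h2) hx
  have hA1min : ∀ x, A1 w a b x → OrbMin w' x → x = α := by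
    intro x h1 hm
    exact le_antisymm (hm α ((cyc_A1 hab hsc h1).symm.trans (cyc_A1 hab hsc hαA1)))
      (hαle x h1)
  have hA2min : ∀ x, A2 w a b x → OrbMin w' x → x = β := by
    intro x h2 hm
    exact le_antisymm (hm β ((cyc_A2 hab hsc h2).symm.trans (cyc_A2 hab hsc hβA2)))
      (hβle x h2)
  have hBne : (Finset.univ.filter (fun z => w.SameCycle a z)).Nonempty :=
    ⟨a, Finset.mem_filter.2 ⟨Finset.mem_univ _, Equiv.Perm.SameCycle.refl w a⟩⟩
  set μ := (Finset.univ.filter (fun z => w.SameCycle a z)).min' hBne with hμdef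
  have hμB : w.SameCycle a μ := (Finset.mem_filter.1 (Finset.min'_mem _ hBne)).2
  have hμle : ∀ z, w.SameCycle a z → μ ≤ z := fun z hz =>
    Finset.min'_le _ _ (Finset.mem_filter.2 ⟨Finset.mem_univ _, hz⟩)
  have homμ : OrbMin w μ := fun y hy => hμle y (hμB.trans hy)
  have hBmin : ∀ x, w.SameCycle a x → OrbMin w x → x = μ := fun x hx hm =>
    le_antisymm (hm μ (hx.symm.trans hμB)) (hμle x hx)
  have hset : Finset.univ.filter (OrbMin w') =
      insert α (insert β ((Finset.univ.filter (OrbMin w)).erase μ)) := by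
    ext x
    simp only [Finset.mem_insert, Finset.mem_erase, Finset.mem_filter,
      Finset.mem_univ, true_and]
    constructor
    · intro hm
      by_cases hx : w.SameCycle a x
      · rcases A1_or_A2 hab hsc hx with h1 | h2
        · exact Or.inl (hA1min x h1 hm)
        · exact Or.inr (Or.inl (hA2min x h2 hm))
      · refine Or.inr (Or.inr ⟨?_, (homout x hx).1 hm⟩)
        intro hc; exact hx (hc ▸ hμB)
    · rintro (rfl | rfl | ⟨hne, hm⟩)
      · exact homα
      · exact homβ
      · have hx : ¬ w.SameCycle a x := fun hc => hne (hBmin x hc hm)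
        exact (homout x hx).2 hm
  have hαno : α ∉ insert β ((Finset.univ.filter (OrbMin w)).erase μ) := by
    simp only [Finset.mem_insert, Finset.mem_erase, Finset.mem_filter,
      Finset.mem_univ, true_and]
    rintro (hc | ⟨hne, hm⟩)
    · exact hαβ hc
    · exact hne (hBmin α (A1_sc hαA1) hm)
  have hβno : β ∉ (Finset.univ.filter (OrbMin w)).erase μ := by
    simp only [Finset.mem_erase, Finset.mem_filter, Finset.mem_univ, true_and]
    rintro ⟨hne, hm⟩
    exact hne (hBmin β (A2_sc hβA2) hm)
  have e1 : cnt w' = ((Finset.univ.filter (OrbMin w)).erase μ).card + 2 := by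
    unfold cnt
    rw [hset, Finset.card_insert_of_notMem hαno, Finset.card_insert_of_notMem hβno]
  have e2 : cnt w = ((Finset.univ.filter (OrbMin w)).erase μ).card + 1 := by
    unfold cnt
    conv_lhs => rw [← Finset.insert_erase (Finset.mem_filter.2 ⟨Finset.mem_univ μ, homμ⟩)]
    rw [Finset.card_insert_of_notMem (Finset.notMem_erase _ _)]
  omega

lemma merge_sc {w : SP} {a b : Fin n} (hab : a ≠ b) (hns : ¬ w.SameCycle a b) :
    (Equiv.swap a b * w).SameCycle a b := by
  have hkey : ∀ i, i < per w b → ((Equiv.swap a b * w) ^ i) b = (w ^ i) b := by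
    intro i
    induction i with
    | zero => intro _; rfl
    | succ i ih =>
      intro hi
      rw [pow_succ_apply, ih (by omega), Equiv.Perm.mul_apply, ← pow_succ_apply]
      have hne_b : (w ^ (i+1)) b ≠ b := pow_ne_self (by omega) hi
      have hne_a : (w ^ (i+1)) b ≠ a := by
        intro hc
        have h : w.SameCycle b a := ⟨(i+1 : ℕ), by rw [zpow_natCast, hc]⟩
        exact hns h.symm
      exact Equiv.swap_apply_of_ne_of_ne hne_a hne_b
  have hper := per_pos w b
  have hfin : ((Equiv.swap a b * w) ^ per w b) b = a := by
    have e : per w b = (per w b - 1) + 1 := by omega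
    rw [e, pow_succ_apply, hkey _ (by omega), Equiv.Perm.mul_apply, ← pow_succ_apply]
    have e2 : per w b - 1 + 1 = per w b := by omega
    rw [e2, per_apply, Equiv.swap_apply_right]
  have h : (Equiv.swap a b * w).SameCycle b a :=
    ⟨(per w b : ℕ), by rw [zpow_natCast, hfin]⟩
  exact h.symm

lemma merge_cnt {w : SP} {a b : Fin n} (hab : a ≠ b) (hns : ¬ w.SameCycle a b) :
    cnt w = cnt (Equiv.swap a b * w) + 1 := by
  have h := split_cnt hab (merge_sc hab hns)
  rw [← mul_assoc, Equiv.swap_mul_self, one_mul] at h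
  exact h

end Cnt

lemma len_conj' (g x : SP) : permRefLen (g⁻¹ * x * g) = permRefLen x := by
  simpa using len_conj g⁻¹ x

lemma len_le_add (u v : SP) : permRefLen v ≤ permRefLen u + permRefLen (u⁻¹ * v) := by
  simpa using len_mul_le u (u⁻¹ * v)

lemma isSwap_of_len_one {x : SP} (h : permRefLen x = 1) : x.IsSwap := by
  obtain ⟨l, hl, hs, hp⟩ := exists_min_fact x
  rw [h] at hl
  match l, hl with
  | [t], _ => simpa using (hp ▸ hs t (by simp) : _)

lemma absLe_trans {u v w : SP} (h1 : permAbsLe u v) (h2 : permAbsLe v w) :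
    permAbsLe u w := by
  unfold permAbsLe at *
  have e1 : permRefLen (u⁻¹ * w) ≤ permRefLen (u⁻¹ * v) + permRefLen (v⁻¹ * w) := by
    have : u⁻¹ * w = (u⁻¹ * v) * (v⁻¹ * w) := by group
    rw [this]; exact len_mul_le _ _
  have e2 := len_le_add u w
  omega

lemma absLe_sub_right {u v : SP} (h : permAbsLe u v) : permAbsLe (u⁻¹ * v) v := by
  unfold permAbsLe at *
  have e : (u⁻¹ * v)⁻¹ * v = v⁻¹ * u * v := by group
  rw [e, len_conj' v u]
  omega

lemma absLe_closure {u v g : SP} (h1 : permAbsLe u v) (h2 : permAbsLe v g) :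
    permAbsLe (u⁻¹ * v) g := by
  unfold permAbsLe at *
  have e1 : permRefLen ((u⁻¹ * v)⁻¹ * g) ≤ permRefLen u + permRefLen (v⁻¹ * g) := by
    have : (u⁻¹ * v)⁻¹ * g = (v⁻¹ * u * v) * (v⁻¹ * g) := by group
    rw [this]
    calc permRefLen ((v⁻¹ * u * v) * (v⁻¹ * g)) ≤ _ := len_mul_le _ _
      _ = _ := by rw [len_conj' v u]
  have e2 := len_le_add (u⁻¹ * v) g
  omega

lemma covers_of {u t : SP} (hsw : t.IsSwap)
    (hlen : permRefLen (u * t) = permRefLen u + 1) : permCovers u (u * t) := by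
  refine ⟨?_, ?_, ?_⟩
  · unfold permAbsLe
    rw [show u⁻¹ * (u * t) = t by group, len_swap hsw, hlen]
  · intro h
    obtain ⟨a, b, hab, rfl⟩ := hsw
    have h1 : u * (1 : Equiv.Perm (Fin n)) = u * Equiv.swap a b := by simpa using h
    exact hab (Equiv.swap_eq_one_iff.1 (mul_left_cancel h1).symm)
  · intro z h1 h2
    unfold permAbsLe at h1 h2
    rw [hlen] at h2
    have hz1 : permRefLen (u⁻¹ * z) = 0 ∨ permRefLen (z⁻¹ * (u * t)) = 0 := by omega
    rcases hz1 with h | h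
    · left; have := eq_one_of_len_zero h
      have : u * (u⁻¹ * z) = u * 1 := by rw [this]
      simpa [mul_assoc] using this
    · right; have := eq_one_of_len_zero h
      have : z * (z⁻¹ * (u * t)) = z * 1 := by rw [this]
      simp [← mul_assoc] at this
      exact this.symm

lemma covers_char {u v : SP} (h : permCovers u v) :
    (u⁻¹ * v).IsSwap ∧ permRefLen v = permRefLen u + 1 := by
  obtain ⟨habs, hne, hcov⟩ := h
  have hne1 : u⁻¹ * v ≠ 1 := fun hc => hne (by
    have : u * (u⁻¹ * v) = u * 1 := by rw [hc]
    simpa [mul_assoc] using this.symm)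
  have hpos : 1 ≤ permRefLen (u⁻¹ * v) := by
    rcases Nat.eq_zero_or_pos (permRefLen (u⁻¹ * v)) with h0 | h0
    · exact absurd (eq_one_of_len_zero h0) hne1
    · exact h0
  have hle1 : permRefLen (u⁻¹ * v) ≤ 1 := by
    by_contra hgt
    push_neg at hgt
    obtain ⟨l, hl, hs, hp⟩ := exists_min_fact (u⁻¹ * v)
    rcases l with _ | ⟨t, rest⟩
    · simp at hl; omega
    case cons =>
      set k := permRefLen (u⁻¹ * v) with hk
      have hrest : rest.prod = t⁻¹ * (u⁻¹ * v) := by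
        rw [← hp]; simp [List.prod_cons]
      have hlenrest : rest.length = k - 1 := by
        simp at hl; omega
      have htsw : t.IsSwap := hs t (by simp)
      have hlt : permRefLen t = 1 := len_swap htsw
      -- z := u * t
      set z := u * t with hz
      have hzv : z⁻¹ * v = rest.prod := by
        rw [hrest, hz, mul_inv_rev, mul_assoc]
      have hlzv_le : permRefLen (z⁻¹ * v) ≤ k - 1 := by
        rw [hzv]
        have := len_le (w := rest.prod) (fun s hs' => hs s (List.mem_cons_of_mem _ hs')) rfl
        omega
      have hlz_le : permRefLen z ≤ permRefLen u + 1 := by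
        have := len_mul_le u t; rw [hlt] at this; exact this
      have hv_le : permRefLen v ≤ permRefLen z + permRefLen (z⁻¹ * v) := len_le_add z v
      have hlz : permRefLen z = permRefLen u + 1 := by
        unfold permAbsLe at habs; omega
      have habs1 : permAbsLe u z := by
        unfold permAbsLe
        rw [show u⁻¹ * z = t by rw [hz]; group, hlt, hlz]
      have hlzv : permRefLen (z⁻¹ * v) = k - 1 := by
        unfold permAbsLe at habs; omega
      have habs2 : permAbsLe z v := by
        unfold permAbsLe at habs ⊢; omega
      rcases hcov z habs1 habs2 with hza | hzb
      · rw [hza] at hlz; omega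
      · rw [hzb] at hlzv
        rw [inv_mul_cancel, len_one] at hlzv
        unfold permAbsLe at habs; omega
  have h1 : permRefLen (u⁻¹ * v) = 1 := le_antisymm hle1 hpos
  refine ⟨isSwap_of_len_one h1, ?_⟩
  unfold permAbsLe at habs; omega

section LenCnt

lemma len_add_cnt_le (w : SP) : permRefLen w + cnt w ≤ n := by
  suffices h : ∀ k (w : SP), n - cnt w ≤ k → permRefLen w + cnt w ≤ n by
    exact h n w (by omega)
  intro k
  induction k with
  | zero =>
    intro w hk
    have hcnt : cnt w = n := le_antisymm (cnt_le w) (by omega)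
    have hw1 : w = 1 := by
      have huniv : (Finset.univ.filter (OrbMin w)) = Finset.univ := by
        apply Finset.eq_univ_of_card
        rw [Fintype.card_fin]
        exact hcnt
      ext x
      have hx : OrbMin w x := (Finset.mem_filter.1 (huniv ▸ Finset.mem_univ x)).2
      have hwx : OrbMin w (w x) := (Finset.mem_filter.1 (huniv ▸ Finset.mem_univ (w x))).2
      have h1 : x ≤ w x := hx (w x) ⟨1, by simp⟩
      have h2 : w x ≤ x := hwx x (Equiv.Perm.SameCycle.symm ⟨1, by simp⟩)
      exact Fin.val_injective.eq_iff.2 (le_antisymm h2 h1) ▸ (le_antisymm h2 h1 ▸ rfl)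
    subst hw1
    rw [len_one, cnt_one]
    omega
  | succ k ih =>
    intro w hk
    by_cases hw : w = 1
    · subst hw; rw [len_one, cnt_one]; omega
    · obtain ⟨x, hx⟩ : ∃ x, w x ≠ x := by
        by_contra hc
        push_neg at hc
        exact hw (Equiv.ext hc)
      have hab : x ≠ w x := fun hc => hx hc.symm
      have hsc : w.SameCycle x (w x) := ⟨1, by simp⟩
      have hc := split_cnt hab hsc
      have hcle := cnt_le (Equiv.swap x (w x) * w)
      have hlen : permRefLen w ≤ 1 + permRefLen (Equiv.swap x (w x) * w) := by
        have e : w = Equiv.swap x (w x) * (Equiv.swap x (w x) * w) := by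
          rw [← mul_assoc, Equiv.swap_mul_self, one_mul]
        calc permRefLen w
            = permRefLen (Equiv.swap x (w x) * (Equiv.swap x (w x) * w)) := by rw [← e]
          _ ≤ permRefLen (Equiv.swap x (w x)) + permRefLen (Equiv.swap x (w x) * w) :=
              len_mul_le _ _
          _ = 1 + permRefLen (Equiv.swap x (w x) * w) := by
              rw [len_swap ⟨x, w x, hab, rfl⟩]
      have hih := ih (Equiv.swap x (w x) * w) (by omega)
      omega

lemma le_len_add_cnt : ∀ (l : List SP), (∀ t ∈ l, t.IsSwap) →
    n ≤ l.length + cnt l.prod := by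
  intro l
  induction l with
  | nil => intro _; simp [cnt_one]
  | cons t l ih =>
    intro hs
    have iht := ih (fun s h => hs s (List.mem_cons_of_mem _ h))
    obtain ⟨a, b, hab, rfl⟩ := hs t (List.mem_cons_self)
    rw [List.prod_cons]
    by_cases hsc : l.prod.SameCycle a b
    · have := split_cnt hab hsc
      simp only [List.length_cons]
      omega
    · have := merge_cnt hab hsc
      simp only [List.length_cons]
      omega

theorem len_cnt (w : SP) : permRefLen w + cnt w = n := by
  refine le_antisymm (len_add_cnt_le w) ?_
  obtain ⟨l, hl, hs, hp⟩ := exists_min_fact w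
  have h := le_len_add_cnt l hs
  rw [hp] at h
  omega

lemma absLe_swap_iff {a b : Fin n} (hab : a ≠ b) (w : SP) :
    permAbsLe (Equiv.swap a b) w ↔ w.SameCycle a b := by
  unfold permAbsLe
  rw [len_swap ⟨a, b, hab, rfl⟩,
    show (Equiv.swap a b)⁻¹ = Equiv.swap a b from Equiv.swap_inv a b]
  have h1 := len_cnt w
  have h2 := len_cnt (Equiv.swap a b * w)
  constructor
  · intro h
    by_contra hns
    have := merge_cnt hab hns
    omega
  · intro hsc
    have := split_cnt hab hsc
    omega

end LenCnt


section Inc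

/-- every cycle of `w` is increasing: each element goes to the next-larger
element of its cycle, the largest to the smallest. -/
def IncCyc (w : SP) : Prop :=
  ∀ x : Fin n,
    ((∃ y, w.SameCycle x y ∧ x < y) →
      x < w x ∧ ∀ y, w.SameCycle x y → x < y → w x ≤ y) ∧
    ((∀ y, w.SameCycle x y → y ≤ x) → ∀ y, w.SameCycle x y → w x ≤ y)

lemma sc_apply_self (w : SP) (x : Fin n) : w.SameCycle x (w x) := ⟨1, by simp⟩

lemma arc_lt {w : SP} {a b : Fin n} (hab : a < b) (hsc : w.SameCycle a b)
    (hinc : IncCyc w) : ∀ i, i < dd w a b → a ≤ (w ^ i) a ∧ (w ^ i) a < b := by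
  have hne : a ≠ b := ne_of_lt hab
  intro i
  induction i with
  | zero => intro _; exact ⟨le_refl _, by simpa using hab⟩
  | succ i ih =>
    intro hi
    obtain ⟨ha1, ha2⟩ := ih (by omega)
    set z := (w ^ i) a with hz
    have hscz : w.SameCycle a z := ⟨(i : ℕ), by rw [zpow_natCast]⟩
    have hzb : w.SameCycle z b := hscz.symm.trans hsc
    have hs := (hinc z).1 ⟨b, hzb, ha2⟩
    have hwz : (w ^ (i+1)) a = w z := by rw [pow_succ_apply]
    have hwzb : w z ≤ b := hs.2 b hzb ha2
    have hnb : (w ^ (i+1)) a ≠ b := pow_ne_b hne hsc hi (by omega)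
    rw [hwz] at hnb ⊢
    exact ⟨le_trans ha1 (le_of_lt hs.1), lt_of_le_of_ne hwzb hnb⟩

lemma arc_ge {w : SP} {a b : Fin n} (hab : a < b) (hsc : w.SameCycle a b)
    (hinc : IncCyc w) : ∀ j, dd w a b + j < per w a →
    ¬(a ≤ (w ^ (dd w a b + j)) a ∧ (w ^ (dd w a b + j)) a < b) := by
  have hne : a ≠ b := ne_of_lt hab
  have hd := dd_mem hne hsc
  intro j
  induction j with
  | zero =>
    intro _
    rw [Nat.add_zero, hd.2]
    rintro ⟨-, hc⟩
    exact lt_irrefl b hc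
  | succ j ih =>
    intro hj
    have ihj := ih (by omega)
    set z := (w ^ (dd w a b + j)) a with hz
    have hscz : w.SameCycle a z := ⟨(dd w a b + j : ℕ), by rw [zpow_natCast]⟩
    have hwz : (w ^ (dd w a b + (j+1))) a = w z := by
      rw [show dd w a b + (j+1) = (dd w a b + j) + 1 by omega, pow_succ_apply]
    have hwa : (w ^ (dd w a b + (j+1))) a ≠ a := pow_ne_self (by omega) (by omega)
    rw [hwz] at hwa ⊢
    rintro ⟨hc1, hc2⟩
    rcases lt_or_ge z a with hza | haz
    · -- z < a : successor of z is at most a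
      have hs := (hinc z).1 ⟨a, hscz.symm, hza⟩
      have := hs.2 a hscz.symm hza
      have : w z < a := lt_of_le_of_ne this hwa
      exact absurd hc1 (not_le.2 this)
    · -- z ≥ b
      have hzb : b ≤ z := by
        rcases not_and_or.1 ihj with h | h
        · exact absurd haz h
        · exact le_of_not_gt h
      by_cases hex : ∃ y, w.SameCycle z y ∧ z < y
      · have hs := (hinc z).1 hex
        have : b ≤ w z := le_trans hzb (le_of_lt hs.1)
        exact absurd hc2 (not_lt.2 this)
      · push_neg at hex
        have hmax : ∀ y, w.SameCycle z y → y ≤ z := fun y hy => hex y hy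
        have := (hinc z).2 hmax a hscz.symm
        have : w z < a := lt_of_le_of_ne this hwa
        exact absurd hc1 (not_le.2 this)

lemma arc_iff {w : SP} {a b : Fin n} (hab : a < b) (hsc : w.SameCycle a b)
    (hinc : IncCyc w) (x : Fin n) :
    A1 w a b x ↔ (w.SameCycle a x ∧ a ≤ x ∧ x < b) := by
  have hne : a ≠ b := ne_of_lt hab
  constructor
  · rintro ⟨i, hi, rfl⟩
    exact ⟨⟨(i : ℕ), by rw [zpow_natCast]⟩, arc_lt hab hsc hinc i hi⟩
  · rintro ⟨hx, hax, hxb⟩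
    rcases A1_or_A2 hne hsc hx with h1 | h2
    · exact h1
    · obtain ⟨i, hdi, hip, rfl⟩ := h2
      exfalso
      exact arc_ge hab hsc hinc (i - dd w a b)
        (by omega) (by rw [show dd w a b + (i - dd w a b) = i by omega]; exact ⟨hax, hxb⟩)

lemma arc2_iff {w : SP} {a b : Fin n} (hab : a < b) (hsc : w.SameCycle a b)
    (hinc : IncCyc w) (x : Fin n) :
    A2 w a b x ↔ (w.SameCycle a x ∧ ¬(a ≤ x ∧ x < b)) := by
  have hne : a ≠ b := ne_of_lt hab
  constructor
  · intro h2
    refine ⟨A2_sc h2, fun hc => ?_⟩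
    exact A1_A2_disj hne hsc ((arc_iff hab hsc hinc x).2 ⟨A2_sc h2, hc⟩) h2
  · rintro ⟨hx, hnc⟩
    rcases A1_or_A2 hne hsc hx with h1 | h2
    · exact absurd ((arc_iff hab hsc hinc x).1 h1).2 hnc
    · exact h2

end Inc


section SplitInc

lemma split_inc {w : SP} {a b : Fin n} (hab : a < b) (hsc : w.SameCycle a b)
    (hinc : IncCyc w) : IncCyc (Equiv.swap a b * w) := by
  have hne : a ≠ b := ne_of_lt hab
  have harc := arc_iff hab hsc hinc
  have harc2 := arc2_iff hab hsc hinc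
  -- helper: same cycle in w from classes
  have hsc11 : ∀ {x y}, A1 w a b x → A1 w a b y → w.SameCycle x y := by
    intro x y hx hy; exact (A1_sc hx).symm.trans (A1_sc hy)
  have hsc22 : ∀ {x y}, A2 w a b x → A2 w a b y → w.SameCycle x y := by
    intro x y hx hy; exact (A2_sc hx).symm.trans (A2_sc hy)
  have hsc11' : ∀ {x y}, A1 w a b x → A1 w a b y →
      (Equiv.swap a b * w).SameCycle x y := by
    intro x y hx hy; exact (cyc_A1 hne hsc hx).symm.trans (cyc_A1 hne hsc hy)
  have hsc22' : ∀ {x y}, A2 w a b x → A2 w a b y →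
      (Equiv.swap a b * w).SameCycle x y := by
    intro x y hx hy; exact (cyc_A2 hne hsc hx).symm.trans (cyc_A2 hne hsc hy)
  intro z
  constructor
  · -- successor clause
    rintro ⟨y, hy, hzy⟩
    rcases split_classify hne hsc hy with ⟨hout, hxy⟩ | ⟨h1z, h1y⟩ | ⟨h2z, h2y⟩
    · -- z outside the cycle of a
      have hval := (step_out hsc hout).1
      have hs := (hinc z).1 ⟨y, hxy, hzy⟩
      rw [hval]
      refine ⟨hs.1, ?_⟩
      intro y' hy' hzy'
      rcases split_classify hne hsc hy' with ⟨-, h⟩ | ⟨h1, -⟩ | ⟨h2, -⟩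
      · exact hs.2 y' h hzy'
      · exact absurd (A1_sc h1) hout
      · exact absurd (A2_sc h2) hout
    · -- z and y in the first arc
      obtain ⟨hzorb, hza, hzb⟩ := harc z |>.1 h1z
      obtain ⟨hyorb, hya, hyb⟩ := harc y |>.1 h1y
      have hs := (hinc z).1 ⟨b, hzorb.symm.trans hsc, hzb⟩
      have hwzy : w z ≤ y := hs.2 y (hsc11 h1z h1y) hzy
      have hwz1 : A1 w a b (w z) := (harc (w z)).2
        ⟨hzorb.trans (sc_apply_self w z), le_trans hza (le_of_lt hs.1),
          lt_of_le_of_lt hwzy hyb⟩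
      have hvne_a : w z ≠ a := fun hc => absurd (hc ▸ hs.1) (not_lt.2 (hc ▸ hza))
      have hvne_b : w z ≠ b := ne_of_lt (lt_of_le_of_lt hwzy hyb)
      have hval : (Equiv.swap a b * w) z = w z := by
        rw [Equiv.Perm.mul_apply, Equiv.swap_apply_of_ne_of_ne hvne_a hvne_b]
      rw [hval]
      refine ⟨hs.1, ?_⟩
      intro y' hy' hzy'
      rcases split_classify hne hsc hy' with ⟨hout, -⟩ | ⟨-, h1⟩ | ⟨h2, -⟩
      · exact absurd (A1_sc h1z) hout
      · exact hs.2 y' (hsc11 h1z h1) hzy'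
      · exact absurd h2 (fun h => A1_A2_disj hne hsc h1z h)
    · -- z and y in the second arc
      obtain ⟨hzorb, hznot⟩ := harc2 z |>.1 h2z
      have hs := (hinc z).1 ⟨y, hsc22 h2z h2y, hzy⟩
      have horbwz : w.SameCycle a (w z) := hzorb.trans (sc_apply_self w z)
      by_cases hA : w z = a
      · -- wrap onto a : new value is b
        have hval : (Equiv.swap a b * w) z = b := by
          rw [Equiv.Perm.mul_apply, hA, Equiv.swap_apply_left]
        rw [hval]
        have hzlta : z < a := hA ▸ hs.1
        refine ⟨lt_trans hzlta hab, ?_⟩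
        intro y' hy' hzy'
        rcases split_classify hne hsc hy' with ⟨hout, -⟩ | ⟨h1, -⟩ | ⟨-, h2⟩
        · exact absurd (A2_sc h2z) hout
        · exact absurd h1 (fun h => A1_A2_disj hne hsc h h2z)
        · obtain ⟨hy'orb, hy'not⟩ := harc2 y' |>.1 h2
          by_contra hby'
          push_neg at hby'
          have hay' : a ≤ y' := hA ▸ hs.2 y' (hsc22 h2z h2) hzy'
          exact hy'not ⟨hay', hby'⟩
      · by_cases hB : w z = b
        · -- impossible
          exfalso
          have hzb : z < b := hB ▸ hs.1
          have hza : z < a := by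
            rcases not_and_or.1 hznot with h | h
            · exact lt_of_not_ge h
            · exact absurd hzb h
          have := hs.2 a hzorb.symm hza
          rw [hB] at this
          exact absurd hab (not_lt.2 this)
        · by_cases hC : a ≤ w z ∧ w z < b
          · -- impossible : skipping over a
            exfalso
            have hza : z < a := by
              rcases not_and_or.1 hznot with h | h
              · exact lt_of_not_ge h
              · exact absurd (lt_trans hs.1 hC.2) h
            have := hs.2 a hzorb.symm hza
            exact hA (le_antisymm this hC.1)
          · -- stays in second arc
            have hwz2 : A2 w a b (w z) := (harc2 (w z)).2 ⟨horbwz, hC⟩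
            have hval : (Equiv.swap a b * w) z = w z := by
              rw [Equiv.Perm.mul_apply, Equiv.swap_apply_of_ne_of_ne hA hB]
            rw [hval]
            refine ⟨hs.1, ?_⟩
            intro y' hy' hzy'
            rcases split_classify hne hsc hy' with ⟨hout, -⟩ | ⟨h1, -⟩ | ⟨-, h2⟩
            · exact absurd (A2_sc h2z) hout
            · exact absurd h1 (fun h => A1_A2_disj hne hsc h h2z)
            · exact hs.2 y' (hsc22 h2z h2) hzy'
  · -- maximum clause
    intro hmax
    by_cases hcz : w.SameCycle a z
    · rcases A1_or_A2 hne hsc hcz with h1z | h2z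
      · -- z is the max of the first arc
        obtain ⟨hzorb, hza, hzb⟩ := harc z |>.1 h1z
        have hs := (hinc z).1 ⟨b, hzorb.symm.trans hsc, hzb⟩
        have hwzb : w z = b := by
          have hle : w z ≤ b := hs.2 b (hzorb.symm.trans hsc) hzb
          rcases lt_or_eq_of_le hle with hlt | heq
          · exfalso
            have hwz1 : A1 w a b (w z) := (harc (w z)).2
              ⟨hzorb.trans (sc_apply_self w z), le_trans hza (le_of_lt hs.1), hlt⟩
            have := hmax (w z) (hsc11' h1z hwz1)
            exact absurd hs.1 (not_lt.2 this)
          · exact heq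
        have hval : (Equiv.swap a b * w) z = a := by
          rw [Equiv.Perm.mul_apply, hwzb, Equiv.swap_apply_right]
        rw [hval]
        intro y' hy'
        rcases split_classify hne hsc hy' with ⟨hout, -⟩ | ⟨-, h1⟩ | ⟨h2, -⟩
        · exact absurd (A1_sc h1z) hout
        · exact (harc y' |>.1 h1).2.1
        · exact absurd h2 (fun h => A1_A2_disj hne hsc h1z h)
      · -- z is the max of the second arc, hence of the whole cycle
        obtain ⟨hzorb, hznot⟩ := harc2 z |>.1 h2z
        have hbz : b ≤ z := hmax b (hsc22' h2z (A2_b hne hsc))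
        have hmaxw : ∀ y, w.SameCycle z y → y ≤ z := by
          intro y hy
          rcases A1_or_A2 hne hsc (hzorb.trans hy) with h1 | h2
          · exact le_trans (le_of_lt (harc y |>.1 h1).2.2) hbz
          · exact hmax y (hsc22' h2z h2)
        have hmin := (hinc z).2 hmaxw
        have horbwz : w.SameCycle a (w z) := hzorb.trans (sc_apply_self w z)
        have hwza : w z ≤ a := hmin a hzorb.symm
        by_cases hA : w z = a
        · have hval : (Equiv.swap a b * w) z = b := by
            rw [Equiv.Perm.mul_apply, hA, Equiv.swap_apply_left]
          rw [hval]
          intro y' hy'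
          rcases split_classify hne hsc hy' with ⟨hout, -⟩ | ⟨h1, -⟩ | ⟨-, h2⟩
          · exact absurd (A2_sc h2z) hout
          · exact absurd h1 (fun h => A1_A2_disj hne hsc h h2z)
          · obtain ⟨hy'orb, hy'not⟩ := harc2 y' |>.1 h2
            by_contra hby'
            push_neg at hby'
            have hay' : a ≤ y' := hA ▸ hmin y' (hzorb.symm.trans hy'orb)
            exact hy'not ⟨hay', hby'⟩
        · have hB : w z ≠ b := ne_of_lt (lt_of_le_of_lt hwza hab)
          have hval : (Equiv.swap a b * w) z = w z := by
            rw [Equiv.Perm.mul_apply, Equiv.swap_apply_of_ne_of_ne hA hB]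
          rw [hval]
          intro y' hy'
          rcases split_classify hne hsc hy' with ⟨hout, -⟩ | ⟨h1, -⟩ | ⟨-, h2⟩
          · exact absurd (A2_sc h2z) hout
          · exact absurd h1 (fun h => A1_A2_disj hne hsc h h2z)
          · exact hmin y' (hzorb.symm.trans (A2_sc h2))
    · -- z outside
      have hval := (step_out hsc hcz).1
      have hmaxw : ∀ y, w.SameCycle z y → y ≤ z := by
        intro y hy
        exact hmax y (cyc_out hsc hcz hy)
      have hmin := (hinc z).2 hmaxw
      rw [hval]
      intro y' hy'
      rcases split_classify hne hsc hy' with ⟨-, h⟩ | ⟨h1, -⟩ | ⟨h2, -⟩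
      · exact hmin y' h
      · exact absurd (A1_sc h1) hcz
      · exact absurd (A2_sc h2) hcz

end SplitInc


section Rotate

lemma incCyc_finRotate : IncCyc (finRotate n) := by
  cases n with
  | zero => intro x; exact x.elim0
  | succ m =>
    intro x
    constructor
    · rintro ⟨y, -, hxy⟩
      have hxl : x < Fin.last m := lt_of_lt_of_le hxy (Fin.le_last y)
      have hval : ((x + 1 : Fin (m+1)) : ℕ) = (x : ℕ) + 1 := Fin.val_add_one_of_lt hxl
      rw [finRotate_succ_apply]
      constructor
      · rw [Fin.lt_def, hval]; omega
      · intro y' _ hxy'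
        rw [Fin.le_def, hval]
        rw [Fin.lt_def] at hxy'
        omega
    · intro hmaxx y' _
      by_cases hxl : x = Fin.last m
      · rw [finRotate_succ_apply, hxl, Fin.last_add_one]
        exact Fin.zero_le y'
      · exfalso
        have hlt : x < Fin.last m := lt_of_le_of_ne (Fin.le_last x) hxl
        have h1 := hmaxx (finRotate (m+1) x) (sc_apply_self _ x)
        rw [finRotate_succ_apply, Fin.le_def, Fin.val_add_one_of_lt hlt] at h1
        omega

lemma incCyc_of_word : ∀ (l : List SP), (∀ t ∈ l, t.IsSwap) →
    ∀ w : SP, permRefLen (l.prod * w) = l.length + permRefLen w →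
    IncCyc (l.prod * w) → IncCyc w := by
  intro l
  induction l with
  | nil => intro _ w _ hi; simpa using hi
  | cons t l ih =>
    intro hs w hlen hinc
    obtain ⟨a, b, hab, ht⟩ := hs t (List.mem_cons_self)
    have hv_le : permRefLen (l.prod * w) ≤ l.length + permRefLen w := by
      calc permRefLen (l.prod * w) ≤ permRefLen l.prod + permRefLen w := len_mul_le _ _
        _ ≤ l.length + permRefLen w := by
            have := len_le (w := l.prod) (fun s h => hs s (List.mem_cons_of_mem _ h)) rfl
            omega
    obtain ⟨v, hv⟩ : ∃ v, l.prod * w = v := ⟨_, rfl⟩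
    have hprod : (t :: l).prod * w = t * v := by
      rw [List.prod_cons, mul_assoc, hv]
    rw [hprod] at hinc hlen
    rw [hv] at hv_le
    have hswv : permRefLen (t * v) ≤ 1 + permRefLen v := by
      calc permRefLen (t * v) ≤ permRefLen t + permRefLen v := len_mul_le _ _
        _ = 1 + permRefLen v := by rw [len_swap ⟨a, b, hab, ht⟩]
    have hlen' : permRefLen (t * v) = 1 + l.length + permRefLen w := by
      simp only [List.length_cons] at hlen
      omega
    have hveq : permRefLen v = l.length + permRefLen w := by omega
    have hid : Equiv.swap a b * (t * v) = v := by
      rw [ht, ← mul_assoc, Equiv.swap_mul_self, one_mul]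
    have hid2 : t * (t * v) = v := by
      rw [ht, ← mul_assoc, Equiv.swap_mul_self, one_mul]
    have hscv : (t * v).SameCycle a b := by
      by_contra hns
      rw [ht] at hns
      have hm2 := merge_cnt hab hns
      rw [← ht] at hm2
      rw [hid2] at hm2
      have h1 := len_cnt v
      have h2 := len_cnt (t * v)
      omega
    have hincv : IncCyc v := by
      rcases lt_or_gt_of_ne hab with h | h
      · rw [← hid, ht]
        exact split_inc h (ht ▸ hscv) (ht ▸ hinc)
      · have h1 : (Equiv.swap b a * v).SameCycle b a := by
          rw [Equiv.swap_comm b a]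
          exact ht ▸ hscv.symm
        have h2 : IncCyc (Equiv.swap b a * v) := by
          rw [Equiv.swap_comm b a]
          exact ht ▸ hinc
        have h3 := split_inc h h1 h2
        rw [Equiv.swap_comm b a, ← ht] at h3
        rwa [hid2] at h3
    exact ih (fun s h => hs s (List.mem_cons_of_mem _ h)) w (by rw [hv]; exact hveq)
      (by rw [hv]; exact hincv)

lemma incCyc_of_absLe_rotate {w : SP} (h : permAbsLe w (finRotate n)) : IncCyc w := by
  set γ := finRotate n with hγ
  set m := γ * w⁻¹ with hm
  have hmw : m * w = γ := by rw [hm, mul_assoc, inv_mul_cancel, mul_one]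
  have hlm : permRefLen m = permRefLen (w⁻¹ * γ) := by
    have : m = w * (w⁻¹ * γ) * w⁻¹ := by rw [hm]; group
    rw [this, len_conj]
  obtain ⟨l, hl, hs, hp⟩ := exists_min_fact m
  refine incCyc_of_word l hs w ?_ ?_
  · rw [hp, hmw]
    unfold permAbsLe at h
    rw [hl, hlm]
    omega
  · rw [hp, hmw]
    exact incCyc_finRotate

end Rotate


section Words

/-- a reduced T-word for `w` -/
def Red (w : SP) (l : List SP) : Prop :=
  (∀ t ∈ l, t.IsSwap) ∧ l.prod = w ∧ l.length = permRefLen w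

lemma red_exists (w : SP) : ∃ l, Red w l := by
  obtain ⟨l, hl, hs, hp⟩ := exists_min_fact w
  exact ⟨l, hs, hp, hl⟩

lemma red_cons {w t : SP} {l : List SP} (h : Red w (t :: l)) :
    t.IsSwap ∧ permAbsLe t w ∧ Red (t⁻¹ * w) l := by
  obtain ⟨hs, hp, hl⟩ := h
  have hts : t.IsSwap := hs t (List.mem_cons_self)
  have hlt : permRefLen t = 1 := len_swap hts
  have hpl : l.prod = t⁻¹ * w := by
    rw [← hp, List.prod_cons, ← mul_assoc, inv_mul_cancel, one_mul]
  have hub : permRefLen (t⁻¹ * w) ≤ l.length :=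
    len_le (fun s hsl => hs s (List.mem_cons_of_mem _ hsl)) hpl
  have hlb : permRefLen w ≤ 1 + permRefLen (t⁻¹ * w) := by
    calc permRefLen w = permRefLen (t * (t⁻¹ * w)) := by
          rw [← mul_assoc, mul_inv_cancel, one_mul]
      _ ≤ permRefLen t + permRefLen (t⁻¹ * w) := len_mul_le _ _
      _ = 1 + permRefLen (t⁻¹ * w) := by rw [hlt]
  simp only [List.length_cons] at hl
  refine ⟨hts, ?_, fun s hsl => hs s (List.mem_cons_of_mem _ hsl), hpl, ?_⟩
  · unfold permAbsLe
    rw [hlt]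
    omega
  · omega

lemma red_cons_of {w t : SP} {l : List SP} (hts : t.IsSwap)
    (ht : permAbsLe t w) (h : Red (t⁻¹ * w) l) : Red w (t :: l) := by
  obtain ⟨hs, hp, hl⟩ := h
  have hlt : permRefLen t = 1 := len_swap hts
  unfold permAbsLe at ht
  refine ⟨?_, ?_, ?_⟩
  · intro s hsl
    rcases List.mem_cons.1 hsl with rfl | hmem
    · exact hts
    · exact hs s hmem
  · rw [List.prod_cons, hp, ← mul_assoc, mul_inv_cancel, one_mul]
  · simp only [List.length_cons]
    omega

lemma red_mem : ∀ (l : List SP) (w : SP), Red w l →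
    ∀ s ∈ l, s.IsSwap ∧ permAbsLe s w := by
  intro l
  induction l with
  | nil => intro w _ s hs; exact absurd hs (by simp)
  | cons t l ih =>
    intro w h s hs
    obtain ⟨hts, habs, hred⟩ := red_cons h
    rcases List.mem_cons.1 hs with rfl | hmem
    · exact ⟨hts, habs⟩
    · obtain ⟨h1, h2⟩ := ih (t⁻¹ * w) hred s hmem
      exact ⟨h1, absLe_trans h2 (absLe_sub_right habs)⟩

lemma exists_rmin {r : SP → SP → Prop}
    (htrans : ∀ a b c : SP, a.IsSwap → b.IsSwap → c.IsSwap → r a b → r b c → r a c)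
    (htotal : ∀ s t : SP, s.IsSwap → t.IsSwap → s ≠ t → r s t ∨ r t s)
    (s : Finset SP) :
    (∀ x ∈ s, Equiv.Perm.IsSwap x) → s.Nonempty → ∃ m ∈ s, ∀ x ∈ s, x ≠ m → r m x := by
  induction s using Finset.induction_on with
  | empty => intro _ h; exact absurd h (by simp)
  | insert a s ha ih =>
    intro hsw _
    rcases s.eq_empty_or_nonempty with rfl | hsne
    · refine ⟨a, Finset.mem_insert_self a _, ?_⟩
      intro x hx hxa
      rcases Finset.mem_insert.1 hx with rfl | h
      · exact absurd rfl hxa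
      · exact absurd h (by simp)
    · obtain ⟨m', hm's, hm'⟩ := ih (fun x hx => hsw x (Finset.mem_insert_of_mem hx)) hsne
      have ham' : a ≠ m' := fun hc => ha (hc ▸ hm's)
      have haw : a.IsSwap := hsw a (Finset.mem_insert_self a s)
      have hm'w : m'.IsSwap := hsw m' (Finset.mem_insert_of_mem hm's)
      rcases htotal a m' haw hm'w ham' with h | h
      · refine ⟨a, Finset.mem_insert_self a _, ?_⟩
        intro x hx hxa
        rcases Finset.mem_insert.1 hx with rfl | hmem
        · exact absurd rfl hxa
        · by_cases hxm : x = m'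
          · exact hxm ▸ h
          · exact htrans a m' x haw hm'w (hsw x (Finset.mem_insert_of_mem hmem)) h
              (hm' x hmem hxm)
      · refine ⟨m', Finset.mem_insert_of_mem hm's, ?_⟩
        intro x hx hxm
        rcases Finset.mem_insert.1 hx with rfl | hmem
        · exact h
        · exact hm' x hmem hxm

lemma cc_chain {r : SP → SP → Prop}
    (htrans : ∀ a b c : SP, a.IsSwap → b.IsSwap → c.IsSwap → r a b → r b c → r a c)
    (hcompat : ∀ i j k : Fin n, i < j → j < k →
      r (Equiv.swap i j) (Equiv.swap i k) ∧ r (Equiv.swap i k) (Equiv.swap j k))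
    {μ ν p q : Fin n} (hμν : μ < ν) (hpq : p < q) (hνq : ν ≤ q)
    (hp : p = μ ∨ ν ≤ p) (hne : ¬(p = μ ∧ q = ν)) :
    r (Equiv.swap μ ν) (Equiv.swap p q) := by
  have swμν : (Equiv.swap μ ν).IsSwap := ⟨μ, ν, ne_of_lt hμν, rfl⟩
  rcases hp with rfl | hνp
  · -- p = μ
    have hqν : q ≠ ν := fun hc => hne ⟨rfl, hc⟩
    have hνq' : ν < q := lt_of_le_of_ne hνq (Ne.symm hqν)
    exact (hcompat p ν q hμν hνq').1
  · rcases eq_or_lt_of_le hνp with rfl | hνp'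
    · -- p = ν
      have hc := hcompat μ ν q hμν hpq
      have s2 : (Equiv.swap μ q).IsSwap := ⟨μ, q, ne_of_lt (lt_trans hμν hpq), rfl⟩
      have s3 : (Equiv.swap ν q).IsSwap := ⟨ν, q, ne_of_lt hpq, rfl⟩
      exact htrans _ _ _ swμν s2 s3 hc.1 hc.2
    · -- ν < p
      have h1 := (hcompat μ ν p hμν hνp').1   -- (μν) < (μp)
      have h2 := (hcompat μ p q (lt_trans hμν hνp') hpq).1  -- (μp) < (μq)
      have h3 := (hcompat μ p q (lt_trans hμν hνp') hpq).2  -- (μq) < (pq)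
      have s1 : (Equiv.swap μ p).IsSwap := ⟨μ, p, ne_of_lt (lt_trans hμν hνp'), rfl⟩
      have s2 : (Equiv.swap μ q).IsSwap :=
        ⟨μ, q, ne_of_lt (lt_trans (lt_trans hμν hνp') hpq), rfl⟩
      have s3 : (Equiv.swap p q).IsSwap := ⟨p, q, ne_of_lt hpq, rfl⟩
      exact htrans _ _ _ swμν s2 s3 (htrans _ _ _ swμν s1 s2 h1 h2) h3

end Words


section F3

lemma lemF3 {r : SP → SP → Prop}
    (hasymm : ∀ s t : SP, s.IsSwap → t.IsSwap → r s t → ¬ r t s)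
    (htrans : ∀ a b c : SP, a.IsSwap → b.IsSwap → c.IsSwap → r a b → r b c → r a c)
    (htotal : ∀ s t : SP, s.IsSwap → t.IsSwap → s ≠ t → r s t ∨ r t s)
    (hcompat : ∀ i j k : Fin n, i < j → j < k →
      r (Equiv.swap i j) (Equiv.swap i k) ∧ r (Equiv.swap i k) (Equiv.swap j k))
    {w : SP} (hinc : IncCyc w)
    {tstar : SP} (hts : tstar.IsSwap) (htsw : permAbsLe tstar w)
    (hmin : ∀ s : SP, s.IsSwap → permAbsLe s w → s ≠ tstar → r tstar s)
    {t : SP} (ht : t.IsSwap) (htw : permAbsLe t w) (hne : t ≠ tstar) :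
    ∃ s', s'.IsSwap ∧ permAbsLe s' (t⁻¹ * w) ∧ (s' = tstar ∨ r s' t) := by
  obtain ⟨x, y, hxy, htxy⟩ : ∃ x y, x < y ∧ t = Equiv.swap x y := by
    obtain ⟨x, y, hxy, htxy⟩ := ht
    rcases lt_or_gt_of_ne hxy with h | h
    · exact ⟨x, y, h, htxy⟩
    · exact ⟨y, x, h, by rw [htxy, Equiv.swap_comm]⟩
  obtain ⟨p, q, hpq, htspq⟩ := id hts
  have hxyne : x ≠ y := ne_of_lt hxy
  have hscxy : w.SameCycle x y := (absLe_swap_iff hxyne w).1 (htxy ▸ htw)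
  have hscpq : w.SameCycle p q := (absLe_swap_iff hpq w).1 (htspq ▸ htsw)
  have ht_inv : t⁻¹ * w = Equiv.swap x y * w := by rw [htxy, Equiv.swap_inv]
  by_cases hcase : w.SameCycle x p
  case neg =>
    -- t* lives in a different cycle : it survives
    refine ⟨tstar, ⟨p, q, hpq, htspq⟩, ?_, Or.inl rfl⟩
    rw [ht_inv, htspq]
    exact (absLe_swap_iff hpq _).2 (cyc_out hscxy hcase hscpq)
  case pos =>
    -- the cycle O of x (and of t*'s endpoints) ; μ its min, ν its second element
    have hBne : (Finset.univ.filter (fun z => w.SameCycle x z)).Nonempty :=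
      ⟨x, Finset.mem_filter.2 ⟨Finset.mem_univ _, Equiv.Perm.SameCycle.refl w x⟩⟩
    set μ := (Finset.univ.filter (fun z => w.SameCycle x z)).min' hBne with hμdef
    have hμB : w.SameCycle x μ := (Finset.mem_filter.1 (Finset.min'_mem _ hBne)).2
    have hμle : ∀ z, w.SameCycle x z → μ ≤ z := fun z hz =>
      Finset.min'_le _ _ (Finset.mem_filter.2 ⟨Finset.mem_univ _, hz⟩)
    -- the orbit is nontrivial : some element exceeds μ
    have hμlt : ∃ z, w.SameCycle μ z ∧ μ < z := by
      by_cases hxμ : x = μ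
      · exact ⟨y, hxμ ▸ hscxy, hxμ ▸ hxy⟩
      · exact ⟨x, hμB.symm, lt_of_le_of_ne (hμle x (Equiv.Perm.SameCycle.refl w x))
          (Ne.symm hxμ)⟩
    have hcl := (hinc μ).1 hμlt
    set ν := w μ with hνdef
    have hμν : μ < ν := hcl.1
    have hνsucc : ∀ z, w.SameCycle x z → μ < z → ν ≤ z := fun z hz hμz =>
      hcl.2 z (hμB.symm.trans hz) hμz
    have hscμν : w.SameCycle μ ν := sc_apply_self w μ
    have hswμν : (Equiv.swap μ ν).IsSwap := ⟨μ, ν, ne_of_lt hμν, rfl⟩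
    have habsμν : permAbsLe (Equiv.swap μ ν) w :=
      (absLe_swap_iff (ne_of_lt hμν) w).2 hscμν
    -- t* must be (μ, ν)
    have htseq : tstar = Equiv.swap μ ν := by
      by_contra hne2
      have h1 := hmin (Equiv.swap μ ν) hswμν habsμν (fun hc => hne2 hc.symm)
      -- and r (swap μ ν) tstar by the compat chain
      obtain ⟨p', q', hpq', htspq'⟩ : ∃ p' q', p' < q' ∧ tstar = Equiv.swap p' q' := by
        rcases lt_or_gt_of_ne hpq with h | h
        · exact ⟨p, q, h, htspq⟩
        · exact ⟨q, p, h, by rw [htspq, Equiv.swap_comm]⟩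
      have hscp'q' : w.SameCycle p' q' := (absLe_swap_iff (ne_of_lt hpq') w).1
        (htspq' ▸ htsw)
      have hscxp' : w.SameCycle x p' := by
        rcases Equiv.swap_comm p q ▸ htspq ▸ htspq' with h
        -- p' q' is {p, q} as a set ; both are in the cycle of x
        by_cases hpp : p' = p
        · exact hpp ▸ hcase
        · -- p' = q
          have : p' = q ∨ p' = p := by
            have happ : (Equiv.swap p' q') p' = q' := Equiv.swap_apply_left p' q'
            have h2 : tstar p' = q' := by rw [htspq']; exact happ
            have h3 : (Equiv.swap p q) p' = q' := by rw [← htspq]; exact h2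
            by_cases h4 : p' = p
            · exact Or.inr h4
            · by_cases h5 : p' = q
              · exact Or.inl h5
              · rw [Equiv.swap_apply_of_ne_of_ne h4 h5] at h3
                exact absurd h3 (ne_of_lt hpq')
          rcases this with h6 | h6
          · exact h6 ▸ (hcase.trans hscpq)
          · exact h6 ▸ hcase
      have hμp' : μ ≤ p' := hμle p' hscxp'
      have hνq'le : ν ≤ q' := hνsucc q' (hscxp'.trans hscp'q')
        (lt_of_le_of_lt hμp' hpq')
      have hpcond : p' = μ ∨ ν ≤ p' := by
        by_cases h7 : p' = μ
        · exact Or.inl h7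
        · exact Or.inr (hνsucc p' hscxp' (lt_of_le_of_ne hμp' (Ne.symm h7)))
      have hnepair : ¬(p' = μ ∧ q' = ν) := by
        rintro ⟨rfl, rfl⟩
        exact hne2 htspq'
      have h2 := cc_chain htrans hcompat hμν hpq' hνq'le hpcond hnepair
      exact hasymm tstar (Equiv.swap μ ν) hts hswμν h1 (htspq' ▸ h2)
    -- now the case analysis on x
    have harc := arc_iff hxy hscxy hinc
    have harc2 := arc2_iff hxy hscxy hinc
    have hμx : μ ≤ x := hμle x (Equiv.Perm.SameCycle.refl w x)
    rcases eq_or_lt_of_le hμx with hμxeq | hμxlt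
    · -- x = μ : t* survives in the first arc
      have hyν : ν < y := by
        have h1 : ν ≤ y := hνsucc y hscxy (hμxeq ▸ hxy)
        rcases eq_or_lt_of_le h1 with h2 | h2
        · exfalso
          apply hne
          rw [htxy, htseq, ← hμxeq, h2]
        · exact h2
      have hA1μ : A1 w x y μ := (harc μ).2
        ⟨hμB, le_of_eq hμxeq.symm, lt_trans (hμxeq ▸ hμν) hyν⟩
      have hA1ν : A1 w x y ν := (harc ν).2
        ⟨hμB.trans hscμν, le_of_lt (hμxeq ▸ hμν), hyν⟩
      refine ⟨tstar, hts, ?_, Or.inl rfl⟩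
      rw [ht_inv, htseq]
      refine (absLe_swap_iff (ne_of_lt hμν) _).2 ?_
      exact ((cyc_A1 hxyne hscxy hA1μ).symm.trans (cyc_A1 hxyne hscxy hA1ν))
    · -- μ < x
      have hνx : ν ≤ x := hνsucc x (Equiv.Perm.SameCycle.refl w x) hμxlt
      rcases eq_or_lt_of_le hνx with hνxeq | hνxlt
      · -- x = ν
        by_cases hmid : ∃ e, w.SameCycle x e ∧ x < e ∧ e < y
        · obtain ⟨e, hsce, hxe, hey⟩ := hmid
          have hA1x : A1 w x y x := (harc x).2
            ⟨Equiv.Perm.SameCycle.refl w x, le_refl x, hxy⟩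
          have hA1e : A1 w x y e := (harc e).2 ⟨hsce, le_of_lt hxe, hey⟩
          refine ⟨Equiv.swap x e, ⟨x, e, ne_of_lt hxe, rfl⟩, ?_, Or.inr ?_⟩
          · rw [ht_inv]
            refine (absLe_swap_iff (ne_of_lt hxe) _).2 ?_
            exact ((cyc_A1 hxyne hscxy hA1x).symm.trans (cyc_A1 hxyne hscxy hA1e))
          · rw [htxy]
            exact (hcompat x e y hxe hey).1
        · -- no middle element : use (μ, y)
          have hμy : μ < y := lt_trans hμxlt hxy
          have hA2μ : A2 w x y μ := (harc2 μ).2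
            ⟨hμB, fun hc => absurd hμxlt (not_lt.2 hc.1)⟩
          have hA2y : A2 w x y y := (harc2 y).2
            ⟨hscxy, fun hc => lt_irrefl y hc.2⟩
          refine ⟨Equiv.swap μ y, ⟨μ, y, ne_of_lt hμy, rfl⟩, ?_, Or.inr ?_⟩
          · rw [ht_inv]
            refine (absLe_swap_iff (ne_of_lt hμy) _).2 ?_
            exact ((cyc_A2 hxyne hscxy hA2μ).symm.trans (cyc_A2 hxyne hscxy hA2y))
          · rw [htxy]
            exact (hcompat μ x y hμxlt hxy).2
      · -- ν < x : t* survives in the second arc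
        have hA2μ : A2 w x y μ := (harc2 μ).2
          ⟨hμB, fun hc => absurd hμxlt (not_lt.2 hc.1)⟩
        have hA2ν : A2 w x y ν := (harc2 ν).2
          ⟨hμB.trans hscμν, fun hc => absurd hνxlt (not_lt.2 hc.1)⟩
        refine ⟨tstar, hts, ?_, Or.inl rfl⟩
        rw [ht_inv, htseq]
        refine (absLe_swap_iff (ne_of_lt hμν) _).2 ?_
        exact ((cyc_A2 hxyne hscxy hA2μ).symm.trans (cyc_A2 hxyne hscxy hA2ν))

end F3


section WordTheorem

lemma incCyc_div {w t : SP} (hinc : IncCyc w) (hts : t.IsSwap)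
    (htw : permAbsLe t w) : IncCyc (t⁻¹ * w) := by
  obtain ⟨a, b, hab, rfl⟩ := hts
  rw [Equiv.swap_inv]
  have hsc : w.SameCycle a b := (absLe_swap_iff hab w).1 htw
  rcases lt_or_gt_of_ne hab with h | h
  · exact split_inc h hsc hinc
  · rw [Equiv.swap_comm]
    exact split_inc h hsc.symm hinc

lemma not_absLe_self_div {w t : SP} (hts : t.IsSwap) (htw : permAbsLe t w) :
    ¬ permAbsLe t (t⁻¹ * w) := by
  intro h
  unfold permAbsLe at h htw
  rw [len_swap hts] at h htw
  have e : t⁻¹ * (t⁻¹ * w) = w := by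
    obtain ⟨a, b, hab, rfl⟩ := hts
    rw [Equiv.swap_inv, ← mul_assoc, Equiv.swap_mul_self, one_mul]
  rw [e] at h
  omega

lemma word_theorem {r : SP → SP → Prop}
    (hasymm : ∀ s t : SP, s.IsSwap → t.IsSwap → r s t → ¬ r t s)
    (htrans : ∀ a b c : SP, a.IsSwap → b.IsSwap → c.IsSwap → r a b → r b c → r a c)
    (htotal : ∀ s t : SP, s.IsSwap → t.IsSwap → s ≠ t → r s t ∨ r t s)
    (hcompat : ∀ i j k : Fin n, i < j → j < k →
      r (Equiv.swap i j) (Equiv.swap i k) ∧ r (Equiv.swap i k) (Equiv.swap j k)) :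
    ∀ (k : ℕ) (w : SP), IncCyc w → permRefLen w = k →
    ∃ l₀, Red w l₀ ∧ l₀.Pairwise r ∧
      (∀ s : SP, s.IsSwap → permAbsLe s w → ∀ t' ∈ l₀.head?, t' = s ∨ r t' s) ∧
      (∀ l, Red w l → l.Pairwise r → l = l₀) ∧
      (∀ l, Red w l → l ≠ l₀ → List.Lex r l₀ l) := by
  intro k
  induction k with
  | zero =>
    intro w hinc hlen
    have hw1 : w = 1 := eq_one_of_len_zero hlen
    subst hw1
    have hred_nil : Red (1 : SP) [] := ⟨by simp, by simp, by simp [len_one]⟩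
    have hforce : ∀ l : List SP, Red 1 l → l = [] := by
      intro l hl
      obtain ⟨-, -, hlen'⟩ := hl
      rw [len_one] at hlen'
      exact List.length_eq_zero_iff.1 hlen'
    refine ⟨[], hred_nil, by simp, ?_, ?_, ?_⟩
    · intro s _ _ t' ht'
      simp at ht'
    · intro l hl _
      exact hforce l hl
    · intro l hl hne
      exact absurd (hforce l hl) hne
  | succ k ih =>
    intro w hinc hlen
    have hSne : (Finset.univ.filter (fun t : SP => t.IsSwap ∧ permAbsLe t w)).Nonempty := by
      obtain ⟨l, hred⟩ := red_exists w
      rcases l with _ | ⟨t, l'⟩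
      · exfalso
        obtain ⟨-, -, hlen'⟩ := hred
        rw [hlen] at hlen'
        simp at hlen'
      · obtain ⟨hts, habs, -⟩ := red_cons hred
        exact ⟨t, Finset.mem_filter.2 ⟨Finset.mem_univ _, hts, habs⟩⟩
    obtain ⟨tstar, htsS, htsmin⟩ := exists_rmin htrans htotal _
      (fun x hx => ((Finset.mem_filter.1 hx).2).1) hSne
    have hts : tstar.IsSwap := (Finset.mem_filter.1 htsS).2.1
    have htsw : permAbsLe tstar w := (Finset.mem_filter.1 htsS).2.2
    have hmin : ∀ s : SP, s.IsSwap → permAbsLe s w → s ≠ tstar → r tstar s := by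
      intro s h1 h2 h3
      exact htsmin s (Finset.mem_filter.2 ⟨Finset.mem_univ _, h1, h2⟩) h3
    have hlen2 : permRefLen (tstar⁻¹ * w) = k := by
      have h := htsw
      unfold permAbsLe at h
      rw [len_swap hts] at h
      omega
    have hinc2 : IncCyc (tstar⁻¹ * w) := incCyc_div hinc hts htsw
    obtain ⟨l₀, hred₀, hpair₀, hhead₀, huniq₀, hlex₀⟩ := ih (tstar⁻¹ * w) hinc2 hlen2
    have hredc : Red w (tstar :: l₀) := red_cons_of hts htsw hred₀
    have hmem₀ : ∀ s ∈ l₀, r tstar s := by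
      intro s hs
      obtain ⟨hsw', habs'⟩ := red_mem l₀ (tstar⁻¹ * w) hred₀ s hs
      have hsne : s ≠ tstar := by
        rintro rfl
        exact not_absLe_self_div hts htsw habs'
      exact hmin s hsw' (absLe_trans habs' (absLe_sub_right htsw)) hsne
    refine ⟨tstar :: l₀, hredc, List.pairwise_cons.2 ⟨hmem₀, hpair₀⟩, ?_, ?_, ?_⟩
    · intro s hsw habs t' ht'
      simp only [List.head?_cons, Option.mem_def, Option.some.injEq] at ht'
      subst ht'
      by_cases hse : s = tstar
      · exact Or.inl hse.symm
      · exact Or.inr (hmin s hsw habs hse)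
    · intro l hl hp
      rcases l with _ | ⟨t, l'⟩
      · exfalso
        obtain ⟨-, -, hlen'⟩ := hl
        rw [hlen] at hlen'
        simp at hlen'
      obtain ⟨hts', habs', hred'⟩ := red_cons hl
      obtain ⟨hpt, hp'⟩ := List.pairwise_cons.1 hp
      have hlent : permRefLen (t⁻¹ * w) = k := by
        have h := habs'
        unfold permAbsLe at h
        rw [len_swap hts'] at h
        omega
      have hteq : t = tstar := by
        by_contra htne
        have hrt : r tstar t := hmin t hts' habs' htne
        rcases Nat.eq_zero_or_pos k with hk0 | hkpos
        · -- k = 0 : w is a single transposition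
          obtain ⟨-, hprod', hlen'⟩ := hred'
          have hl0 : l' = [] := by
            rw [hlent, hk0] at hlen'
            exact List.length_eq_zero_iff.1 hlen'
          have hwt : w = t := by
            rw [hl0] at hprod'
            simp only [List.prod_nil] at hprod'
            have : t * (1 : SP) = t * (t⁻¹ * w) := by rw [← hprod']
            rw [mul_one, ← mul_assoc, mul_inv_cancel, one_mul] at this
            exact this.symm
          have h := htsw
          unfold permAbsLe at h
          rw [len_swap hts, hwt, len_swap hts'] at h
          have h0 : permRefLen (tstar⁻¹ * t) = 0 := by omega
          have h1 := eq_one_of_len_zero h0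
          apply htne
          have : tstar * (tstar⁻¹ * t) = tstar * 1 := by rw [h1]
          rw [← mul_assoc, mul_inv_cancel, one_mul, mul_one] at this
          exact this
        · -- k ≥ 1 : use the key geometric lemma
          obtain ⟨s', hs'sw, hs'abs, hs'or⟩ :=
            lemF3 hasymm htrans htotal hcompat hinc hts htsw hmin hts' habs' htne
          obtain ⟨l₁, hred₁, hpair₁, hhead₁, huniq₁, hlex₁⟩ :=
            ih (t⁻¹ * w) (incCyc_div hinc hts' habs') hlent
          have hl'eq : l' = l₁ := huniq₁ l' hred' hp'
          rcases l₁ with _ | ⟨s₁, l₁'⟩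
          · obtain ⟨-, -, hlen₁⟩ := hred₁
            rw [hlent] at hlen₁
            simp only [List.length_nil] at hlen₁
            omega
          · have hs₁head : s₁ ∈ (s₁ :: l₁').head? := by simp
            have hhm := hhead₁ s' hs'sw hs'abs s₁ hs₁head
            have hrts₁ : r t s₁ := hpt s₁ (by rw [hl'eq]; exact List.mem_cons_self)
            have hs₁sw : s₁.IsSwap :=
              (red_mem _ _ hred₁ s₁ (List.mem_cons_self)).1
            rcases hs'or with rfl | hrs't
            · rcases hhm with rfl | h
              · exact hasymm s₁ t hts hts' hrt hrts₁
              · have h1 := htrans t s₁ s' hts' hs₁sw hts hrts₁ h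
                exact hasymm s' t hts hts' hrt h1
            · rcases hhm with rfl | h
              · exact hasymm s₁ t hs₁sw hts' hrs't hrts₁
              · have h1 := htrans s₁ s' t hs₁sw hs'sw hts' h hrs't
                exact hasymm t s₁ hts' hs₁sw hrts₁ h1
      subst hteq
      rw [huniq₀ l' hred' hp']
    · intro l hl hne
      rcases l with _ | ⟨t, l'⟩
      · exfalso
        obtain ⟨-, -, hlen'⟩ := hl
        rw [hlen] at hlen'
        simp at hlen'
      obtain ⟨hts', habs', hred'⟩ := red_cons hl
      by_cases hteq : t = tstar
      · subst hteq
        have hne' : l' ≠ l₀ := fun hc => hne (by rw [hc])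
        exact List.Lex.cons (hlex₀ l' hred' hne')
      · exact List.Lex.rel (hmin t hts' habs' hteq)

end WordTheorem


section Chains

lemma permLabels_cons_cons (x y : SP) (L : List SP) :
    permLabels (x :: y :: L) = (x⁻¹ * y) :: permLabels (y :: L) := rfl

lemma permLabels_singleton (x : SP) : permLabels [x] = [] := rfl

lemma scanl_head (f : SP → SP → SP) (b : SP) (l : List SP) :
    (List.scanl f b l).head? = some b := by cases l <;> simp [List.scanl_cons]

lemma scanl_shape (f : SP → SP → SP) (b : SP) (l : List SP) :
    ∃ rest, List.scanl f b l = b :: rest := by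
  cases l <;> simp [List.scanl_cons]

lemma labels_scanl : ∀ (l : List SP) (u : SP),
    permLabels (List.scanl (fun x t => x * t) u l) = l := by
  intro l
  induction l with
  | nil => intro u; rfl
  | cons t l ih =>
    intro u
    rw [List.scanl_cons]
    obtain ⟨rest, hrest⟩ := scanl_shape (fun x t => x * t) (u * t) l
    rw [hrest, permLabels_cons_cons, ← hrest, ih (u * t)]
    congr 1
    rw [← mul_assoc, inv_mul_cancel, one_mul]

lemma scanl_getLast : ∀ (l : List SP) (u : SP),
    (List.scanl (fun x t => x * t) u l).getLast? = some (u * l.prod) := by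
  intro l
  induction l with
  | nil => intro u; simp [List.scanl]
  | cons t l ih =>
    intro u
    rw [List.scanl_cons]
    obtain ⟨rest, hrest⟩ := scanl_shape (fun x t => x * t) (u * t) l
    rw [hrest, List.getLast?_cons_cons, ← hrest, ih (u * t)]
    rw [List.prod_cons, mul_assoc]

lemma chain_scanl : ∀ (l : List SP) (u : SP), (∀ t ∈ l, t.IsSwap) →
    permRefLen (u * l.prod) = permRefLen u + l.length →
    (List.scanl (fun x t => x * t) u l).Chain' permCovers := by
  intro l
  induction l with
  | nil => intro u _ _; simp [List.scanl]; exact List.isChain_singleton u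
  | cons t l ih =>
    intro u hs hlen
    have hts : t.IsSwap := hs t (List.mem_cons_self)
    have hassoc : u * (t :: l).prod = (u * t) * l.prod := by
      rw [List.prod_cons, mul_assoc]
    have h1 : permRefLen (u * t) = permRefLen u + 1 := by
      have hle : permRefLen (u * t) ≤ permRefLen u + 1 := by
        have := len_mul_le u t
        rw [len_swap hts] at this
        exact this
      have hge : permRefLen (u * (t :: l).prod) ≤ permRefLen (u * t) + l.length := by
        rw [hassoc]
        calc permRefLen ((u * t) * l.prod) ≤ permRefLen (u * t) + permRefLen l.prod :=
              len_mul_le _ _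
          _ ≤ permRefLen (u * t) + l.length := by
              have := len_le (w := l.prod)
                (fun s hsl => hs s (List.mem_cons_of_mem _ hsl)) rfl
              omega
      simp only [List.length_cons] at hlen
      omega
    have hch := ih (u * t) (fun s hsl => hs s (List.mem_cons_of_mem _ hsl)) (by
      rw [← hassoc, hlen, h1]
      simp only [List.length_cons]
      omega)
    rw [List.scanl_cons]
    refine List.isChain_cons.2 ⟨?_, hch⟩
    intro y hy
    rw [scanl_head] at hy
    simp only [Option.mem_def, Option.some.injEq] at hy
    subst hy
    exact covers_of hts h1

lemma labels_prod : ∀ (l : List SP) (x : SP),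
    (permLabels (x :: l)).prod = x⁻¹ * l.getLastD x := by
  intro l
  induction l with
  | nil => intro x; simp [permLabels_singleton]
  | cons y l ih =>
    intro x
    rw [permLabels_cons_cons, List.prod_cons, ih y, List.getLastD_cons,
      ← mul_assoc, mul_assoc x⁻¹ y y⁻¹, mul_inv_cancel, mul_one]

lemma chain_facts : ∀ (l : List SP) (x : SP), (x :: l).Chain' permCovers →
    (∀ s ∈ permLabels (x :: l), s.IsSwap) ∧
    permRefLen (l.getLastD x) = permRefLen x + l.length := by
  intro l
  induction l with
  | nil =>
    intro x _
    exact ⟨by simp [permLabels_singleton], by simp⟩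
  | cons y l ih =>
    intro x hch
    obtain ⟨hcov, hch'⟩ := List.isChain_cons_cons.1 hch
    have hcc := covers_char hcov
    obtain ⟨hsw, hlen⟩ := ih y hch'
    constructor
    · intro s hsl
      rw [permLabels_cons_cons] at hsl
      rcases List.mem_cons.1 hsl with rfl | hmem
      · exact hcc.1
      · exact hsw s hmem
    · rw [List.getLastD_cons, hlen, hcc.2]
      simp only [List.length_cons]
      omega

lemma labels_length (x : SP) (l : List SP) :
    (permLabels (x :: l)).length = l.length := by
  unfold permLabels
  rw [List.length_zipWith]
  simp

lemma chain_red {u v : SP} (huv : permAbsLe u v) {l : List SP}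
    (hmc : permMaxChain u v l) : ∃ rest, l = u :: rest ∧ Red (u⁻¹ * v) (permLabels l) := by
  obtain ⟨hhead, hlast, hch⟩ := hmc
  obtain ⟨rest, rfl⟩ : ∃ rest, l = u :: rest := by
    rcases l with _ | ⟨x, rest⟩
    · simp at hhead
    · simp only [List.head?_cons, Option.some.injEq] at hhead
      exact ⟨rest, by rw [hhead]⟩
  refine ⟨rest, rfl, ?_⟩
  have hlastv : rest.getLastD u = v := by
    rw [List.getLast?_cons] at hlast
    rw [List.getLastD_eq_getLast?]
    exact Option.some.inj hlast
  obtain ⟨hsw, hlen⟩ := chain_facts rest u hch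
  refine ⟨hsw, ?_, ?_⟩
  · rw [labels_prod, hlastv]
  · rw [labels_length]
    unfold permAbsLe at huv
    rw [hlastv] at hlen
    omega

lemma chain_eq_scanl : ∀ (rest : List SP) (u : SP),
    u :: rest = List.scanl (fun x t => x * t) u (permLabels (u :: rest)) := by
  intro rest
  induction rest with
  | nil => intro u; rfl
  | cons y l ih =>
    intro u
    rw [permLabels_cons_cons, List.scanl_cons]
    rw [mul_inv_cancel_left]
    rw [← ih y]

end Chains

end EL18

/-- In `S_n` with Coxeter element the `n`-cycle `γ = (1, 2, …, n)` (i.e. `finRotate n`),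
any strict total order `r` on transpositions with `(i,j) < (i,k) < (j,k)` for
`i < j < k` makes the natural edge labeling of `[1, γ]` an EL-labeling: each
non-singleton interval `[u, v]` of `[1, γ]` has a unique rising maximal chain,
which is lexicographically strictly smaller than every other maximal chain. -/
theorem statement18 (n : ℕ) (r : Equiv.Perm (Fin n) → Equiv.Perm (Fin n) → Prop)
    (hasymm : ∀ s t, s.IsSwap → t.IsSwap → r s t → ¬ r t s)
    (htrans : ∀ a b c, a.IsSwap → b.IsSwap → c.IsSwap → r a b → r b c → r a c)
    (htotal : ∀ s t, s.IsSwap → t.IsSwap → s ≠ t → r s t ∨ r t s)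
    (hcompat : ∀ i j k : Fin n, i < j → j < k →
      r (Equiv.swap i j) (Equiv.swap i k) ∧ r (Equiv.swap i k) (Equiv.swap j k)) :
    ∀ u v : Equiv.Perm (Fin n), permAbsLe 1 u → permAbsLe u v →
      permAbsLe v (finRotate n) → u ≠ v →
      ∃ l, (permMaxChain u v l ∧ (permLabels l).Pairwise r) ∧
        (∀ l', permMaxChain u v l' → (permLabels l').Pairwise r → l' = l) ∧
        (∀ l', permMaxChain u v l' → l' ≠ l →
          List.Lex r (permLabels l) (permLabels l')) := by
  intro u v hu1 huv hvg hneq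
  have hw_abs : permAbsLe (u⁻¹ * v) (finRotate n) := EL18.absLe_closure huv hvg
  have hinc : EL18.IncCyc (u⁻¹ * v) := EL18.incCyc_of_absLe_rotate hw_abs
  obtain ⟨l₀, hred₀, hpair₀, hhead₀, huniq₀, hlex₀⟩ :=
    EL18.word_theorem hasymm htrans htotal hcompat (permRefLen (u⁻¹ * v)) (u⁻¹ * v)
      hinc rfl
  have huuv : u * (u⁻¹ * v) = v := by rw [← mul_assoc, mul_inv_cancel, one_mul]
  obtain ⟨hsw₀, hprod₀, hlen₀⟩ := id hred₀
  have hscan_len : permRefLen (u * l₀.prod) = permRefLen u + l₀.length := by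
    rw [hprod₀, huuv, hlen₀]
    exact huv.symm
  refine ⟨List.scanl (fun x t => x * t) u l₀, ⟨⟨?_, ?_, ?_⟩, ?_⟩, ?_, ?_⟩
  · exact EL18.scanl_head _ _ _
  · rw [EL18.scanl_getLast, hprod₀, huuv]
  · exact EL18.chain_scanl l₀ u hsw₀ hscan_len
  · rw [EL18.labels_scanl]
    exact hpair₀
  · intro l' hmc hpw
    obtain ⟨rest, rfl, hred'⟩ := EL18.chain_red huv hmc
    have hll : permLabels (u :: rest) = l₀ := huniq₀ _ hred' hpw
    rw [EL18.chain_eq_scanl rest u, hll]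
  · intro l' hmc hne'
    obtain ⟨rest, rfl, hred'⟩ := EL18.chain_red huv hmc
    have hll : permLabels (u :: rest) ≠ l₀ := by
      intro hc
      apply hne'
      rw [EL18.chain_eq_scanl rest u, hc]
    have hlex := hlex₀ _ hred' hll
    rw [EL18.labels_scanl]
    exact hlex

end
end

section
/- Let W be a finite real reflection group with Coxeter element γ and natural edge labeling λ(u,v) = u⁻¹v on NC_W(γ), with labels in T totally ordered arbitrarily. Then every non-singleton interval [u, v] of NC_W(γ) has a unique lexicographically smallest maximal chain, and this chain is rising with respect to λ. -/
open scoped RealInnerProductSpace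
open Module

noncomputable section

variable {V : Type*} [NormedAddCommGroup V] [InnerProductSpace ℝ V]

/-- `g` acts as the orthogonal reflection in the hyperplane orthogonal to `α`. -/
def reflFormula (α : V) (g : V ≃ₗᵢ[ℝ] V) : Prop :=
  ∀ v, g v = v - (2 * ⟪α, v⟫ / ⟪α, α⟫) • α

/-- `g` is an orthogonal reflection. -/
def IsReflection (g : V ≃ₗᵢ[ℝ] V) : Prop :=
  ∃ α : V, α ≠ 0 ∧ reflFormula α g

/-- A finite real reflection group: a finite subgroup of the orthogonal group
generated by its reflections. -/
def IsReflectionGroup (W : Subgroup (V ≃ₗᵢ[ℝ] V)) : Prop :=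
  Finite W ∧ Subgroup.closure {g | g ∈ W ∧ IsReflection g} = W

/-- Reflection length: the least `k` such that `w` is a product of `k` reflections. -/
def refLen (W : Subgroup (V ≃ₗᵢ[ℝ] V)) (w : W) : ℕ :=
  sInf {k | ∃ l : List W, l.length = k ∧ (∀ t ∈ l, IsReflection (t : W).1) ∧ l.prod = w}

/-- The absolute order on `W`. -/
def absLe (W : Subgroup (V ≃ₗᵢ[ℝ] V)) (u v : W) : Prop :=
  refLen W u + refLen W (u⁻¹ * v) = refLen W v

/-- Covering relation of the absolute order. -/
def covers (W : Subgroup (V ≃ₗᵢ[ℝ] V)) (u v : W) : Prop :=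
  absLe W u v ∧ u ≠ v ∧ ∀ z, absLe W u z → absLe W z v → z = u ∨ z = v

/-- The fixed subspace of an isometry. -/
def fixedSpace (g : V ≃ₗᵢ[ℝ] V) : Submodule ℝ V where
  carrier := {v | g v = v}
  add_mem' := by
    intro a b ha hb
    simp only [Set.mem_setOf_eq, map_add] at *
    rw [ha, hb]
  zero_mem' := by simp
  smul_mem' := by
    intro c a ha
    simp only [Set.mem_setOf_eq, map_smul] at *
    rw [ha]

/-- A root system for the reflection group `W`. -/
def IsRootSystemFor (W : Subgroup (V ≃ₗᵢ[ℝ] V)) (Φ : Set V) : Prop :=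
  Φ.Finite ∧ (∀ α ∈ Φ, α ≠ 0) ∧ (∀ α ∈ Φ, -α ∈ Φ) ∧
  (∀ α ∈ Φ, ∀ c : ℝ, c • α ∈ Φ → c = 1 ∨ c = -1) ∧
  (∀ α ∈ Φ, ∃ t ∈ W, reflFormula α t) ∧
  (∀ t ∈ W, IsReflection t → ∃ α ∈ Φ, reflFormula α t) ∧
  (∀ g ∈ W, ∀ α ∈ Φ, g α ∈ Φ)

/-- A simple system for `Φ`: roots `σ 1, …, σ ℓ` which are linearly independent and
such that every root is a nonnegative or nonpositive combination of them. -/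
def IsSimpleSystem (Φ : Set V) {ℓ : ℕ} (σ : Fin ℓ → V) : Prop :=
  (∀ i, σ i ∈ Φ) ∧ LinearIndependent ℝ σ ∧
  ∀ α ∈ Φ, (∃ c : Fin ℓ → ℝ, (∀ i, 0 ≤ c i) ∧ α = ∑ i, c i • σ i) ∨
           (∃ c : Fin ℓ → ℝ, (∀ i, 0 ≤ c i) ∧ -α = ∑ i, c i • σ i)

/-- `γ` is a Coxeter element of `W`: a product, in some order, of the reflections in
the `ℓ` simple roots of some simple system of the root system `Φ`. -/
def IsCoxeterElement (W : Subgroup (V ≃ₗᵢ[ℝ] V)) (Φ : Set V) (ℓ : ℕ) (γ : W) : Prop :=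
  ∃ σ : Fin ℓ → V, IsSimpleSystem Φ σ ∧
    ∃ t : Fin ℓ → W, (∀ i, reflFormula (σ i) (t i).1) ∧
      ∃ l : List (Fin ℓ), l.Nodup ∧ (∀ i, i ∈ l) ∧ (l.map t).prod = γ

/-- `l` is a maximal (saturated) chain from `u` to `v` in the absolute order. -/
def IsMaximalChain (W : Subgroup (V ≃ₗᵢ[ℝ] V)) (u v : W) (l : List W) : Prop :=
  l.head? = some u ∧ l.getLast? = some v ∧ l.Chain' (covers W)

/-- The label of a chain under the natural edge labeling `λ (x, y) = x⁻¹ * y`. -/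
def chainLabels (W : Subgroup (V ≃ₗᵢ[ℝ] V)) (l : List W) : List W :=
  l.zipWith (fun x y => x⁻¹ * y) l.tail

end

section Aux
open scoped RealInnerProductSpace
variable {V : Type*} [NormedAddCommGroup V] [InnerProductSpace ℝ V]

lemma refl_apply_self {α : V} (hα : α ≠ 0) {g : V ≃ₗᵢ[ℝ] V} (h : reflFormula α g) :
    g α = -α := by
  have h0 : ⟪α, α⟫ ≠ 0 := inner_self_ne_zero.mpr hα
  rw [h α, mul_div_assoc, div_self h0, mul_one, two_smul]; abel

lemma refl_mul_self {g : V ≃ₗᵢ[ℝ] V} (h : IsReflection g) : g * g = 1 := by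
  obtain ⟨α, hα, hf⟩ := h
  have h0 : ⟪α, α⟫ ≠ 0 := inner_self_ne_zero.mpr hα
  ext v
  show g (g v) = v
  have h1 : ⟪α, g v⟫ = -⟪α, v⟫ := by
    rw [hf v, inner_sub_right, real_inner_smul_right]
    field_simp
    ring
  rw [hf (g v), h1, hf v]
  have h2 : 2 * -⟪α, v⟫ / ⟪α, α⟫ = -(2 * ⟪α, v⟫ / ⟪α, α⟫) := by ring
  rw [h2, neg_smul, sub_neg_eq_add, sub_add_cancel]

lemma refl_ne_one {g : V ≃ₗᵢ[ℝ] V} (h : IsReflection g) : g ≠ 1 := by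
  obtain ⟨α, hα, hf⟩ := h
  intro hg
  have h1 := refl_apply_self hα hf
  rw [hg] at h1
  simp only [LinearIsometryEquiv.coe_one, id_eq] at h1
  have h2 : α + α = 0 := by nth_rewrite 1 [h1]; simp
  have h3 : (2 : ℝ) • α = 0 := by rw [two_smul]; exact h2
  rcases smul_eq_zero.mp h3 with h | h
  · norm_num at h
  · exact hα h

lemma refl_conj {g t : V ≃ₗᵢ[ℝ] V} (h : IsReflection t) :
    IsReflection (g * t * g⁻¹) := by
  obtain ⟨α, hα, hf⟩ := h
  have i1 : ∀ v, ⟪g α, v⟫ = ⟪α, g.symm v⟫ := by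
    intro v
    rw [← g.inner_map_map α (g.symm v), g.apply_symm_apply]
  have i2 : ⟪g α, g α⟫ = ⟪α, α⟫ := g.inner_map_map α α
  refine ⟨g α, fun h0 => hα (by simpa using congrArg g.symm h0), fun v => ?_⟩
  calc (g * t * g⁻¹) v = g (t (g.symm v)) := rfl
    _ = g (g.symm v - (2 * ⟪α, g.symm v⟫ / ⟪α, α⟫) • α) := by rw [hf]
    _ = v - (2 * ⟪α, g.symm v⟫ / ⟪α, α⟫) • (g α) := by
        rw [map_sub, map_smul, g.apply_symm_apply]
    _ = v - (2 * ⟪g α, v⟫ / ⟪g α, g α⟫) • (g α) := by rw [i1, i2]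

variable {W : Subgroup (V ≃ₗᵢ[ℝ] V)}

lemma refl_mul_self' {t : W} (h : IsReflection t.1) : t * t = 1 :=
  Subtype.ext (refl_mul_self h)

lemma refl_inv_eq {t : W} (h : IsReflection t.1) : t⁻¹ = t :=
  inv_eq_of_mul_eq_one_right (refl_mul_self' h)

lemma refl_ne_one' {t : W} (h : IsReflection t.1) : t ≠ 1 := by
  intro ht
  exact refl_ne_one h (by rw [ht]; rfl)

lemma prod_reverse_self_inv {G : Type*} [Group G] :
    ∀ (l : List G), (∀ t ∈ l, t * t = 1) → l.reverse.prod = l.prod⁻¹ := by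
  intro l
  induction l with
  | nil => simp
  | cons a l ih =>
    intro h
    rw [List.reverse_cons, List.prod_append, List.prod_cons, List.prod_cons,
      List.prod_nil, mul_one, ih (fun t ht => h t (List.mem_cons_of_mem a ht)),
      mul_inv_rev]
    congr 1
    exact (inv_eq_of_mul_eq_one_right (h a (List.mem_cons_self))).symm

/-- every element of a reflection group is a product of reflections -/
lemma exists_refl_factorization (hW : IsReflectionGroup W) (w : W) :
    ∃ l : List W, (∀ t ∈ l, IsReflection (t : W).1) ∧ l.prod = w := by
  have hw : w.1 ∈ Subgroup.closure {g | g ∈ W ∧ IsReflection g} := by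
    rw [hW.2]; exact w.2
  have key : ∀ x (hx : x ∈ Subgroup.closure {g | g ∈ W ∧ IsReflection g}),
      ∀ hxW : x ∈ W, ∃ l : List W, (∀ t ∈ l, IsReflection (t : W).1) ∧
        l.prod = ⟨x, hxW⟩ := by
    intro x hx
    induction hx using Subgroup.closure_induction with
    | mem g hg => exact fun hxW => ⟨[⟨g, hg.1⟩], by simpa using hg.2, by simp⟩
    | one => exact fun _ => ⟨[], by simp, by rw [List.prod_nil]; exact Subtype.ext rfl⟩
    | mul a b ha hb iha ihb =>
      intro hxW
      have haW : a ∈ W := by rw [← hW.2]; exact ha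
      have hbW : b ∈ W := by rw [← hW.2]; exact hb
      obtain ⟨l₁, h₁, p₁⟩ := iha haW
      obtain ⟨l₂, h₂, p₂⟩ := ihb hbW
      refine ⟨l₁ ++ l₂, ?_, ?_⟩
      · intro t ht
        rcases List.mem_append.mp ht with h | h
        · exact h₁ t h
        · exact h₂ t h
      · rw [List.prod_append, p₁, p₂]; rfl
    | inv a ha iha =>
      intro hxW
      have haW : a ∈ W := by rw [← hW.2]; exact ha
      obtain ⟨l, h₁, p₁⟩ := iha haW
      refine ⟨l.reverse, fun t ht => h₁ t (List.mem_reverse.mp ht), ?_⟩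
      rw [prod_reverse_self_inv l (fun t ht => refl_mul_self' (h₁ t ht)), p₁]
      rfl
  exact key w.1 hw w.2

lemma refLen_spec (hW : IsReflectionGroup W) (w : W) :
    ∃ l : List W, l.length = refLen W w ∧ (∀ t ∈ l, IsReflection (t : W).1) ∧
      l.prod = w := by
  have hne : {k | ∃ l : List W, l.length = k ∧ (∀ t ∈ l, IsReflection (t : W).1) ∧
      l.prod = w}.Nonempty := by
    obtain ⟨l, h₁, h₂⟩ := exists_refl_factorization hW w
    exact ⟨l.length, l, rfl, h₁, h₂⟩
  obtain ⟨l, hl, h₁, h₂⟩ := Nat.sInf_mem hne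
  exact ⟨l, hl, h₁, h₂⟩

lemma refLen_le {w : W} {l : List W} (h₁ : ∀ t ∈ l, IsReflection (t : W).1)
    (h₂ : l.prod = w) : refLen W w ≤ l.length :=
  Nat.sInf_le ⟨l, rfl, h₁, h₂⟩

lemma refLen_one : refLen W 1 = 0 :=
  Nat.le_zero.mp (refLen_le (l := []) (by simp) (by simp))

lemma eq_one_of_refLen_eq_zero (hW : IsReflectionGroup W) {w : W}
    (h : refLen W w = 0) : w = 1 := by
  obtain ⟨l, hl, _, hp⟩ := refLen_spec hW w
  rw [h, List.length_eq_zero_iff] at hl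
  rw [← hp, hl, List.prod_nil]

lemma refLen_mul_le (hW : IsReflectionGroup W) (a b : W) :
    refLen W (a * b) ≤ refLen W a + refLen W b := by
  obtain ⟨l₁, hl₁, h₁, p₁⟩ := refLen_spec hW a
  obtain ⟨l₂, hl₂, h₂, p₂⟩ := refLen_spec hW b
  have := refLen_le (w := a * b) (l := l₁ ++ l₂)
    (fun t ht => by rcases List.mem_append.mp ht with h | h; exacts [h₁ t h, h₂ t h])
    (by rw [List.prod_append, p₁, p₂])
  simpa [hl₁, hl₂] using this

lemma refLen_of_refl (hW : IsReflectionGroup W) {t : W} (h : IsReflection t.1) :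
    refLen W t = 1 := by
  have h1 : refLen W t ≤ 1 := refLen_le (l := [t]) (by simpa using h) (by simp)
  have h2 : refLen W t ≠ 0 := fun h0 => refl_ne_one' h (eq_one_of_refLen_eq_zero hW h0)
  omega

lemma refl_of_refLen_eq_one (hW : IsReflectionGroup W) {w : W}
    (h : refLen W w = 1) : IsReflection w.1 := by
  obtain ⟨l, hl, h₁, hp⟩ := refLen_spec hW w
  rw [h] at hl
  obtain ⟨t, rfl⟩ := List.length_eq_one_iff.mp hl
  rw [List.prod_singleton] at hp
  rw [← hp]
  exact h₁ t (List.mem_singleton_self t)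

end Aux

section Aux2
open scoped RealInnerProductSpace
variable {V : Type*} [NormedAddCommGroup V] [InnerProductSpace ℝ V]
variable {W : Subgroup (V ≃ₗᵢ[ℝ] V)}

lemma step_lemma (hW : IsReflectionGroup W) {u v t : W} {l : List W}
    (h : absLe W u v)
    (hrefl : ∀ s ∈ t :: l, IsReflection (s : W).1)
    (hprod : (t :: l).prod = u⁻¹ * v)
    (hlen : (t :: l).length = refLen W (u⁻¹ * v)) :
    absLe W u (u * t) ∧ absLe W (u * t) v ∧ refLen W ((u * t)⁻¹ * v) = l.length := by
  have ht : IsReflection t.1 := hrefl t (List.mem_cons_self)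
  have hid : (u * t)⁻¹ * v = l.prod := by
    rw [mul_inv_rev, mul_assoc, ← hprod, List.prod_cons, ← mul_assoc, inv_mul_cancel,
      one_mul]
  have hA : refLen W ((u * t)⁻¹ * v) ≤ l.length := by
    rw [hid]
    exact refLen_le (fun s hs => hrefl s (List.mem_cons_of_mem t hs)) rfl
  have hub : refLen W (u * t) ≤ refLen W u + 1 := by
    have := refLen_mul_le hW u t
    rwa [refLen_of_refl hW ht] at this
  have hv1 : refLen W v ≤ refLen W (u * t) + refLen W ((u * t)⁻¹ * v) := by
    have := refLen_mul_le hW (u * t) ((u * t)⁻¹ * v)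
    rwa [mul_inv_cancel_left] at this
  have h' : refLen W u + refLen W (u⁻¹ * v) = refLen W v := h
  have hlen' : l.length + 1 = refLen W (u⁻¹ * v) := by simpa using hlen
  have hut : refLen W (u * t) = refLen W u + 1 := by omega
  have hutv : refLen W ((u * t)⁻¹ * v) = l.length := by omega
  refine ⟨?_, ?_, hutv⟩
  · show refLen W u + refLen W (u⁻¹ * (u * t)) = refLen W (u * t)
    rw [inv_mul_cancel_left, refLen_of_refl hW ht, hut]
  · show refLen W (u * t) + refLen W ((u * t)⁻¹ * v) = refLen W v
    omega

lemma covers_iff (hW : IsReflectionGroup W) {u v : W} :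
    covers W u v ↔ absLe W u v ∧ refLen W (u⁻¹ * v) = 1 := by
  constructor
  · rintro ⟨hle, hne, hmax⟩
    refine ⟨hle, ?_⟩
    have h0 : refLen W (u⁻¹ * v) ≠ 0 := by
      intro h0
      exact hne (inv_mul_eq_one.mp (eq_one_of_refLen_eq_zero hW h0))
    by_contra hne1
    have h2 : 2 ≤ refLen W (u⁻¹ * v) := by omega
    obtain ⟨l, hl, hrefl, hprod⟩ := refLen_spec hW (u⁻¹ * v)
    obtain ⟨t, rest, rfl⟩ : ∃ t rest, l = t :: rest := by
      cases l with
      | nil => rw [← hl] at h2; simp at h2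
      | cons a l => exact ⟨a, l, rfl⟩
    obtain ⟨hst1, hst2, hst3⟩ := step_lemma hW hle hrefl hprod hl
    have hrest : 1 ≤ rest.length := by
      have : rest.length + 1 = refLen W (u⁻¹ * v) := by simpa using hl
      omega
    have ht : IsReflection t.1 := hrefl t (List.mem_cons_self)
    have hzu : u * t ≠ u := by
      intro hz
      have hz1 : u * t = u * 1 := by rw [hz, mul_one]
      exact refl_ne_one' ht (mul_left_cancel hz1)
    have hzv : u * t ≠ v := by
      intro hz
      rw [hz] at hst3
      rw [inv_mul_cancel, refLen_one] at hst3
      omega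
    rcases hmax (u * t) hst1 hst2 with h | h
    · exact hzu h
    · exact hzv h
  · rintro ⟨hle, h1⟩
    have hne : u ≠ v := by
      intro h
      rw [h, inv_mul_cancel, refLen_one] at h1
      omega
    refine ⟨hle, hne, fun z hz1 hz2 => ?_⟩
    have e1 : refLen W u + refLen W (u⁻¹ * z) = refLen W z := hz1
    have e2 : refLen W z + refLen W (z⁻¹ * v) = refLen W v := hz2
    have e3 : refLen W u + refLen W (u⁻¹ * v) = refLen W v := hle
    have : refLen W (u⁻¹ * z) = 0 ∨ refLen W (z⁻¹ * v) = 0 := by omega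
    rcases this with h | h
    · left; exact (inv_mul_eq_one.mp (eq_one_of_refLen_eq_zero hW h)).symm
    · right; exact inv_mul_eq_one.mp (eq_one_of_refLen_eq_zero hW h)

lemma chain_exists (hW : IsReflectionGroup W) :
    ∀ k (u v : W), absLe W u v → refLen W (u⁻¹ * v) = k →
      ∃ l : List W, IsMaximalChain W u v l := by
  intro k
  induction k with
  | zero =>
    intro u v h hk
    have huv : u = v := inv_mul_eq_one.mp (eq_one_of_refLen_eq_zero hW hk)
    subst huv
    exact ⟨[u], rfl, rfl, List.isChain_singleton u⟩
  | succ k ih =>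
    intro u v h hk
    obtain ⟨l, hl, hrefl, hprod⟩ := refLen_spec hW (u⁻¹ * v)
    have hlk : l.length = k + 1 := by rw [hl, hk]
    obtain ⟨t, rest, rfl⟩ : ∃ t rest, l = t :: rest := by
      cases l with
      | nil => simp at hlk
      | cons a l => exact ⟨a, l, rfl⟩
    have ht : IsReflection t.1 := hrefl t (List.mem_cons_self)
    obtain ⟨hst1, hst2, hst3⟩ := step_lemma hW h hrefl hprod hl
    have hrk : refLen W ((u * t)⁻¹ * v) = k := by
      rw [hst3]; simpa using hlk
    obtain ⟨l', hh, hla, hch⟩ := ih (u * t) v hst2 hrk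
    obtain ⟨b, l2, rfl⟩ : ∃ b l2, l' = b :: l2 := by
      cases l' with
      | nil => simp at hh
      | cons b l2 => exact ⟨b, l2, rfl⟩
    have hb : b = u * t := by simpa using hh
    subst hb
    refine ⟨u :: (u * t) :: l2, rfl, ?_, ?_⟩
    · rw [List.getLast?_cons_cons]
      exact hla
    · rw [List.Chain', List.isChain_cons_cons]
      refine ⟨(covers_iff hW).mpr ⟨hst1, ?_⟩, hch⟩
      rw [inv_mul_cancel_left]
      exact refLen_of_refl hW ht

lemma chainLabels_cons_cons (a b : W) (l : List W) :
    chainLabels W (a :: b :: l) = (a⁻¹ * b) :: chainLabels W (b :: l) := rfl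

lemma chainLabels_mem (hW : IsReflectionGroup W) :
    ∀ {l : List W}, l.Chain' (covers W) → ∀ x ∈ chainLabels W l, IsReflection x.1 := by
  intro l
  induction l with
  | nil => intro _ x hx; simp [chainLabels] at hx
  | cons a l ih =>
    intro hc x hx
    cases l with
    | nil => simp [chainLabels] at hx
    | cons b l2 =>
      rw [chainLabels_cons_cons] at hx
      rw [List.Chain', List.isChain_cons_cons] at hc
      rcases List.mem_cons.mp hx with h | h
      · subst h
        exact refl_of_refLen_eq_one hW ((covers_iff hW).mp hc.1).2
      · exact ih hc.2 x h

end Aux2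

section Aux3
open scoped RealInnerProductSpace
variable {V : Type*} [NormedAddCommGroup V] [InnerProductSpace ℝ V]
variable {W : Subgroup (V ≃ₗᵢ[ℝ] V)} {r : W → W → Prop}

lemma lex_total (htotal : ∀ s t : W, IsReflection s.1 → IsReflection t.1 → s ≠ t →
      r s t ∨ r t s) :
    ∀ l1 l2 : List W, (∀ t ∈ l1, IsReflection (t : W).1) →
      (∀ t ∈ l2, IsReflection (t : W).1) → l1 ≠ l2 →
      List.Lex r l1 l2 ∨ List.Lex r l2 l1 := by
  intro l1
  induction l1 with
  | nil =>
    intro l2 _ _ hne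
    cases l2 with
    | nil => exact absurd rfl hne
    | cons b s => exact Or.inl List.Lex.nil
  | cons a t ih =>
    intro l2 h1 h2 hne
    cases l2 with
    | nil => exact Or.inr List.Lex.nil
    | cons b s =>
      by_cases hab : a = b
      · subst hab
        have hts : t ≠ s := fun h => hne (by rw [h])
        rcases ih s (fun x hx => h1 x (List.mem_cons_of_mem a hx))
          (fun x hx => h2 x (List.mem_cons_of_mem a hx)) hts with h | h
        · exact Or.inl (List.Lex.cons h)
        · exact Or.inr (List.Lex.cons h)
      · rcases htotal a b (h1 a (List.mem_cons_self))
          (h2 b (List.mem_cons_self)) hab with h | h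
        · exact Or.inl (List.Lex.rel h)
        · exact Or.inr (List.Lex.rel h)

lemma lex_trans (htrans : ∀ a b c : W, IsReflection a.1 → IsReflection b.1 →
      IsReflection c.1 → r a b → r b c → r a c) :
    ∀ l1 l2 : List W, List.Lex r l1 l2 →
      ∀ l3 : List W, (∀ t ∈ l1, IsReflection (t : W).1) →
      (∀ t ∈ l2, IsReflection (t : W).1) → (∀ t ∈ l3, IsReflection (t : W).1) →
      List.Lex r l2 l3 → List.Lex r l1 l3 := by
  intro l1 l2 h12
  induction h12 with
  | nil =>
    intro l3 _ _ _ h23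
    cases h23 with
    | cons _ => exact List.Lex.nil
    | rel _ => exact List.Lex.nil
  | @cons a t s _ ih =>
    intro l3 h1 h2 h3 h23
    cases h23 with
    | @cons _ _ l3' h' =>
      exact List.Lex.cons (ih l3' (fun x hx => h1 x (List.mem_cons_of_mem a hx))
        (fun x hx => h2 x (List.mem_cons_of_mem a hx))
        (fun x hx => h3 x (List.mem_cons_of_mem a hx)) h')
    | @rel _ _ c l3' hr => exact List.Lex.rel hr
  | @rel a t b s hab =>
    intro l3 h1 h2 h3 h23
    cases h23 with
    | @cons _ _ l3' h' => exact List.Lex.rel hab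
    | @rel _ _ c l3' hbc =>
      exact List.Lex.rel (htrans a b c (h1 a (List.mem_cons_self))
        (h2 b (List.mem_cons_self)) (h3 c (List.mem_cons_self)) hab hbc)

lemma lex_asymm (hasymm : ∀ s t : W, IsReflection s.1 → IsReflection t.1 →
      r s t → ¬ r t s) :
    ∀ l1 l2 : List W, List.Lex r l1 l2 →
      (∀ t ∈ l1, IsReflection (t : W).1) → (∀ t ∈ l2, IsReflection (t : W).1) →
      ¬ List.Lex r l2 l1 := by
  intro l1 l2 h12
  induction h12 with
  | nil =>
    intro _ _ h
    cases h
  | @cons a t s _ ih =>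
    intro h1 h2 h21
    cases h21 with
    | @cons _ _ _ h' =>
      exact ih (fun x hx => h1 x (List.mem_cons_of_mem a hx))
        (fun x hx => h2 x (List.mem_cons_of_mem a hx)) h'
    | @rel _ _ _ _ hr =>
      exact hasymm a a (h1 a (List.mem_cons_self)) (h1 a (List.mem_cons_self))
        hr hr
  | @rel a t b s hab =>
    intro h1 h2 h21
    cases h21 with
    | @cons _ _ _ h' =>
      exact hasymm a a (h1 a (List.mem_cons_self)) (h1 a (List.mem_cons_self))
        hab hab
    | @rel _ _ _ _ hba =>
      exact hasymm a b (h1 a (List.mem_cons_self)) (h2 b (List.mem_cons_self))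
        hab hba

lemma finset_min {β : Type*} (q : β → β → Prop) :
    ∀ s : Finset β, s.Nonempty →
      (∀ a ∈ s, ∀ b ∈ s, a ≠ b → q a b ∨ q b a) →
      (∀ a ∈ s, ∀ b ∈ s, ∀ c ∈ s, q a b → q b c → q a c) →
      ∃ m ∈ s, ∀ b ∈ s, b ≠ m → q m b := by
  intro s
  induction s using Finset.cons_induction with
  | empty => intro h; simp at h
  | cons a s ha ih =>
    intro _ htot htr
    rcases s.eq_empty_or_nonempty with rfl | hs
    · refine ⟨a, by simp, ?_⟩
      intro b hb hne
      rcases Finset.mem_cons.mp hb with rfl | hb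
      · exact absurd rfl hne
      · exact absurd hb (Finset.notMem_empty b)
    · obtain ⟨m, hm, hmin⟩ := ih hs
        (fun x hx y hy => htot x (Finset.mem_cons_of_mem hx) y (Finset.mem_cons_of_mem hy))
        (fun x hx y hy z hz => htr x (Finset.mem_cons_of_mem hx)
          y (Finset.mem_cons_of_mem hy) z (Finset.mem_cons_of_mem hz))
      by_cases hqa : q m a
      · refine ⟨m, Finset.mem_cons_of_mem hm, ?_⟩
        intro b hb hne
        rcases Finset.mem_cons.mp hb with rfl | hb
        · exact hqa
        · exact hmin b hb hne
      · have ham : a ≠ m := fun h => ha (h ▸ hm)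
        have hqam : q a m := by
          rcases htot a (Finset.mem_cons_self a s) m (Finset.mem_cons_of_mem hm) ham
            with h | h
          · exact h
          · exact absurd h hqa
        refine ⟨a, Finset.mem_cons_self a s, ?_⟩
        intro b hb hne
        rcases Finset.mem_cons.mp hb with rfl | hb
        · exact absurd rfl hne
        · by_cases hbm : b = m
          · exact hbm ▸ hqam
          · exact htr a (Finset.mem_cons_self a s) m (Finset.mem_cons_of_mem hm)
              b (Finset.mem_cons_of_mem hb) hqam (hmin b hb hbm)

lemma chainLabels_nil : chainLabels W ([] : List W) = [] := rfl
lemma chainLabels_singleton (a : W) : chainLabels W [a] = [] := rfl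

lemma eq_of_chainLabels_eq :
    ∀ l l' : List W, l.head? = l'.head? → chainLabels W l = chainLabels W l' →
      l = l' := by
  intro l
  induction l with
  | nil =>
    intro l' h _
    cases l' with
    | nil => rfl
    | cons b s => simp at h
  | cons a t ih =>
    intro l' h hlab
    cases l' with
    | nil => simp at h
    | cons a' t' =>
      have ha : a = a' := by simpa using h
      subst ha
      cases t with
      | nil =>
        cases t' with
        | nil => rfl
        | cons b' s' => rw [chainLabels_singleton, chainLabels_cons_cons] at hlab; simp at hlab
      | cons b s =>
        cases t' with
        | nil => rw [chainLabels_singleton, chainLabels_cons_cons] at hlab; simp at hlab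
        | cons b' s' =>
          rw [chainLabels_cons_cons, chainLabels_cons_cons] at hlab
          have hb : b = b' := by
            have := (List.cons.injEq _ _ _ _ ▸ hlab).1
            exact mul_left_cancel this
          subst hb
          have : (b :: s) = (b :: s') := by
            apply ih
            · rfl
            · exact (List.cons.injEq _ _ _ _ ▸ hlab).2
          rw [this]

lemma chains_finite (hW : IsReflectionGroup W) (u v : W) :
    {l : List W | IsMaximalChain W u v l}.Finite := by
  haveI : Finite W := hW.1
  haveI : Fintype W := Fintype.ofFinite W
  apply Set.Finite.subset (List.finite_length_le W (Fintype.card W))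
  intro l hl
  obtain ⟨_, _, hc⟩ := hl
  have hpw : l.Pairwise (fun a b => refLen W a < refLen W b) := by
    haveI : IsTrans W (fun a b => refLen W a < refLen W b) :=
      ⟨fun a b c hab hbc => lt_trans hab hbc⟩
    rw [← @List.isChain_iff_pairwise _ (fun a b => refLen W a < refLen W b) _ ⟨fun hab hbc => lt_trans hab hbc⟩]
    apply List.IsChain.imp _ hc
    intro a b hab
    obtain ⟨h1, h2⟩ := (covers_iff hW).mp hab
    have : refLen W a + refLen W (a⁻¹ * b) = refLen W b := h1
    omega
  have hnd : l.Nodup := by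
    apply List.Pairwise.imp _ hpw
    intro a b hab
    intro h
    subst h
    exact lt_irrefl _ hab
  exact hnd.length_le_card
end Aux3

section Aux4
open scoped RealInnerProductSpace
variable {V : Type*} [NormedAddCommGroup V] [InnerProductSpace ℝ V]
variable {W : Subgroup (V ≃ₗᵢ[ℝ] V)} {r : W → W → Prop}

lemma refl_conj' {g t : W} (h : IsReflection t.1) :
    IsReflection ((g * t * g⁻¹ : W) : V ≃ₗᵢ[ℝ] V) := by
  have : ((g * t * g⁻¹ : W) : V ≃ₗᵢ[ℝ] V) = g.1 * t.1 * (g.1)⁻¹ := rfl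
  rw [this]
  exact refl_conj h

/-- rank-two minimum lemma -/
lemma rank2_min (hW : IsReflectionGroup W)
    (htotal : ∀ s t : W, IsReflection s.1 → IsReflection t.1 → s ≠ t → r s t ∨ r t s)
    (htrans : ∀ a b c : W, IsReflection a.1 → IsReflection b.1 → IsReflection c.1 →
      r a b → r b c → r a c)
    {w : W} (hw : refLen W w = 2) :
    ∃ tm : W, IsReflection tm.1 ∧ IsReflection ((tm⁻¹ * w : W) : V ≃ₗᵢ[ℝ] V) ∧
      r tm (tm⁻¹ * w) ∧
      ∀ t : W, IsReflection t.1 → IsReflection ((t⁻¹ * w : W) : V ≃ₗᵢ[ℝ] V) →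
        t ≠ tm → r tm t := by
  haveI : Finite W := hW.1
  classical
  set F : Set W := {t : W | IsReflection t.1 ∧ IsReflection ((t⁻¹ * w : W) : V ≃ₗᵢ[ℝ] V)}
    with hF
  have hclosed : ∀ t ∈ F, (t⁻¹ * w) ∈ F := by
    rintro t ⟨ht1, ht2⟩
    refine ⟨ht2, ?_⟩
    have hid : (t⁻¹ * w)⁻¹ * w = w⁻¹ * t * (w⁻¹)⁻¹ := by
      group
    rw [hid]
    exact refl_conj' ht1
  have hne : F.Nonempty := by
    obtain ⟨l, hl, hrefl, hprod⟩ := refLen_spec hW w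
    rw [hw] at hl
    obtain ⟨a, b, rfl⟩ := List.length_eq_two.mp hl
    have hab : a * b = w := by simpa using hprod
    refine ⟨a, hrefl a (by simp), ?_⟩
    have : a⁻¹ * w = b := by rw [← hab, inv_mul_cancel_left]
    rw [this]
    exact hrefl b (by simp)
  have hfin : F.Finite := Set.toFinite F
  obtain ⟨m, hm, hmin⟩ := finset_min r hfin.toFinset
    (by rwa [Set.Finite.toFinset_nonempty])
    (fun a ha b hb hne => htotal a b (hfin.mem_toFinset.mp ha).1
      (hfin.mem_toFinset.mp hb).1 hne)
    (fun a ha b hb c hc => htrans a b c (hfin.mem_toFinset.mp ha).1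
      (hfin.mem_toFinset.mp hb).1 (hfin.mem_toFinset.mp hc).1)
  have hmF : m ∈ F := hfin.mem_toFinset.mp hm
  have hm2 : (m⁻¹ * w) ∈ F := hclosed m hmF
  have hne2 : m⁻¹ * w ≠ m := by
    intro h
    have : w = m * m := by rw [← mul_inv_cancel_left m w, h]
    rw [this, refl_mul_self' hmF.1, refLen_one] at hw
    omega
  refine ⟨m, hmF.1, hmF.2, ?_, ?_⟩
  · exact hmin (m⁻¹ * w) (hfin.mem_toFinset.mpr hm2) hne2
  · intro t ht1 ht2 hne3
    exact hmin t (hfin.mem_toFinset.mpr ⟨ht1, ht2⟩) hne3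

lemma rank2_covers (hW : IsReflectionGroup W) {x z t : W} (hxz : absLe W x z)
    (hw2 : refLen W (x⁻¹ * z) = 2) (ht : IsReflection t.1)
    (ht' : IsReflection ((t⁻¹ * (x⁻¹ * z) : W) : V ≃ₗᵢ[ℝ] V)) :
    covers W x (x * t) ∧ covers W (x * t) z := by
  have habs : refLen W x + refLen W (x⁻¹ * z) = refLen W z := hxz
  have hid : (x * t)⁻¹ * z = t⁻¹ * (x⁻¹ * z) := by
    rw [mul_inv_rev, mul_assoc]
  have h1 : refLen W ((x * t)⁻¹ * z) = 1 := by
    rw [hid]; exact refLen_of_refl hW ht'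
  have h2 : refLen W (x * t) ≤ refLen W x + 1 := by
    have := refLen_mul_le hW x t
    rwa [refLen_of_refl hW ht] at this
  have h3 : refLen W z ≤ refLen W (x * t) + refLen W ((x * t)⁻¹ * z) := by
    have := refLen_mul_le hW (x * t) ((x * t)⁻¹ * z)
    rwa [mul_inv_cancel_left] at this
  have h4 : refLen W (x * t) = refLen W x + 1 := by omega
  constructor
  · apply (covers_iff hW).mpr
    constructor
    · show refLen W x + refLen W (x⁻¹ * (x * t)) = refLen W (x * t)
      rw [inv_mul_cancel_left, refLen_of_refl hW ht, h4]
    · rw [inv_mul_cancel_left]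
      exact refLen_of_refl hW ht
  · apply (covers_iff hW).mpr
    constructor
    · show refLen W (x * t) + refLen W ((x * t)⁻¹ * z) = refLen W z
      omega
    · exact h1

lemma covers_covers_rank2 (hW : IsReflectionGroup W) {x y z : W}
    (hxy : covers W x y) (hyz : covers W y z) :
    absLe W x z ∧ refLen W (x⁻¹ * z) = 2 ∧
      IsReflection ((x⁻¹ * y : W) : V ≃ₗᵢ[ℝ] V) ∧
      ((x⁻¹ * y)⁻¹ * (x⁻¹ * z) : W) = y⁻¹ * z := by
  obtain ⟨ha1, hb1⟩ := (covers_iff hW).mp hxy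
  obtain ⟨ha2, hb2⟩ := (covers_iff hW).mp hyz
  have e1 : refLen W x + refLen W (x⁻¹ * y) = refLen W y := ha1
  have e2 : refLen W y + refLen W (y⁻¹ * z) = refLen W z := ha2
  have hsplit : x⁻¹ * z = (x⁻¹ * y) * (y⁻¹ * z) := by group
  have hle : refLen W (x⁻¹ * z) ≤ 2 := by
    rw [hsplit]
    have := refLen_mul_le hW (x⁻¹ * y) (y⁻¹ * z)
    omega
  have hge : refLen W z ≤ refLen W x + refLen W (x⁻¹ * z) := by
    have := refLen_mul_le hW x (x⁻¹ * z)
    rwa [mul_inv_cancel_left] at this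
  have h2 : refLen W (x⁻¹ * z) = 2 := by omega
  refine ⟨?_, h2, refl_of_refLen_eq_one hW hb1, by group⟩
  show refLen W x + refLen W (x⁻¹ * z) = refLen W z
  omega

lemma exists_descent :
    ∀ (l : List W), ¬ (chainLabels W l).Chain' r →
      ∃ (m1 : List W) (x y z : W) (m2 : List W),
        l = m1 ++ x :: y :: z :: m2 ∧ ¬ r (x⁻¹ * y) (y⁻¹ * z) := by
  classical
  intro l
  induction l with
  | nil =>
    intro h
    rw [chainLabels_nil] at h
    exact absurd List.isChain_nil h
  | cons a l ih =>
    intro h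
    cases l with
    | nil =>
      rw [chainLabels_singleton] at h
      exact absurd List.isChain_nil h
    | cons b l2 =>
      cases l2 with
      | nil =>
        rw [chainLabels_cons_cons, chainLabels_singleton] at h
        exact absurd (List.isChain_singleton _) h
      | cons c l3 =>
        rw [chainLabels_cons_cons, chainLabels_cons_cons, List.Chain', List.isChain_cons_cons] at h
        by_cases hr : r (a⁻¹ * b) (b⁻¹ * c)
        · have : ¬ ((b⁻¹ * c) :: chainLabels W (c :: l3)).Chain' r := fun hc => h ⟨hr, hc⟩
          obtain ⟨m1, x, y, z, m2, heq, hnr⟩ := ih (by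
            rw [chainLabels_cons_cons]; exact this)
          exact ⟨a :: m1, x, y, z, m2, by rw [heq]; rfl, hnr⟩
        · exact ⟨[], a, b, c, l3, rfl, hr⟩

lemma chainLabels_append :
    ∀ (m1 : List W) (x : W) (l : List W),
      chainLabels W (m1 ++ x :: l) =
        chainLabels W (m1 ++ [x]) ++ chainLabels W (x :: l) := by
  intro m1
  induction m1 with
  | nil => intro x l; simp [chainLabels_singleton]
  | cons a m1 ih =>
    intro x l
    cases m1 with
    | nil => rfl
    | cons b m12 =>
      have h1 : (a :: b :: m12) ++ x :: l = a :: b :: (m12 ++ x :: l) := rfl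
      have h2 : (a :: b :: m12) ++ [x] = a :: b :: (m12 ++ [x]) := rfl
      rw [h1, h2, chainLabels_cons_cons, chainLabels_cons_cons]
      have h3 : b :: (m12 ++ x :: l) = (b :: m12) ++ x :: l := rfl
      have h4 : b :: (m12 ++ [x]) = (b :: m12) ++ [x] := rfl
      rw [h3, h4, ih x l]
      rfl

lemma lex_append_left :
    ∀ (P l1 l2 : List W), List.Lex r l1 l2 → List.Lex r (P ++ l1) (P ++ l2) := by
  intro P
  induction P with
  | nil => intro l1 l2 h; exact h
  | cons a P ih => intro l1 l2 h; exact List.Lex.cons (ih l1 l2 h)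

end Aux4

section Aux5
open scoped RealInnerProductSpace
variable {V : Type*} [NormedAddCommGroup V] [InnerProductSpace ℝ V]
variable {W : Subgroup (V ≃ₗᵢ[ℝ] V)} {r : W → W → Prop}

lemma chain'_pairwise_refl
    (htrans : ∀ a b c : W, IsReflection a.1 → IsReflection b.1 → IsReflection c.1 →
      r a b → r b c → r a c) :
    ∀ l : List W, (∀ t ∈ l, IsReflection (t : W).1) → l.Chain' r → l.Pairwise r := by
  intro l
  induction l with
  | nil => intro _ _; exact List.Pairwise.nil
  | cons a t ih =>
    intro h hc
    cases t with
    | nil => exact List.pairwise_singleton r a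
    | cons b s =>
      rw [List.Chain', List.isChain_cons_cons] at hc
      have hpb := ih (fun x hx => h x (List.mem_cons_of_mem a hx)) hc.2
      refine List.Pairwise.cons ?_ hpb
      intro x hx
      rcases List.mem_cons.mp hx with rfl | hx
      · exact hc.1
      · have hbx : r b x := (List.pairwise_cons.mp hpb).1 x hx
        exact htrans a b x (h a (List.mem_cons_self))
          (h b (List.mem_cons_of_mem a (List.mem_cons_self)))
          (h x (List.mem_cons_of_mem a (List.mem_cons_of_mem b hx))) hc.1 hbx
end Aux5

theorem statement19' {V : Type*} [NormedAddCommGroup V] [InnerProductSpace ℝ V]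
    [FiniteDimensional ℝ V]
    (W : Subgroup (V ≃ₗᵢ[ℝ] V)) (hW : IsReflectionGroup W)
    (r : W → W → Prop)
    (hasymm : ∀ s t : W, IsReflection s.1 → IsReflection t.1 → r s t → ¬ r t s)
    (htrans : ∀ a b c : W, IsReflection a.1 → IsReflection b.1 → IsReflection c.1 →
      r a b → r b c → r a c)
    (htotal : ∀ s t : W, IsReflection s.1 → IsReflection t.1 → s ≠ t → r s t ∨ r t s)
    (u v : W) (huv : absLe W u v) (hne : u ≠ v) :
    ∃ l : List W, IsMaximalChain W u v l ∧
      (∀ l' : List W, IsMaximalChain W u v l' → l' ≠ l →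
        List.Lex r (chainLabels W l) (chainLabels W l')) ∧
      (chainLabels W l).Pairwise r := by
  classical
  haveI : Finite W := hW.1
  have hCfin : {l : List W | IsMaximalChain W u v l}.Finite := chains_finite hW u v
  have hCne : {l : List W | IsMaximalChain W u v l}.Nonempty :=
    chain_exists hW (refLen W (u⁻¹ * v)) u v huv rfl
  have hlab : ∀ l, IsMaximalChain W u v l → ∀ x ∈ chainLabels W l,
      IsReflection (x : W).1 := fun l hl => chainLabels_mem hW hl.2.2
  obtain ⟨m, hmC, hmin⟩ := finset_min
    (fun l l' => List.Lex r (chainLabels W l) (chainLabels W l')) hCfin.toFinset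
    (by rwa [Set.Finite.toFinset_nonempty])
    (by
      intro a ha b hb hab
      have haC := hCfin.mem_toFinset.mp ha
      have hbC := hCfin.mem_toFinset.mp hb
      apply lex_total htotal _ _ (hlab a haC) (hlab b hbC)
      intro heq
      exact hab (eq_of_chainLabels_eq a b (by rw [haC.1, hbC.1]) heq))
    (by
      intro a ha b hb c hc hab hbc
      exact lex_trans htrans _ _ hab _ (hlab a (hCfin.mem_toFinset.mp ha))
        (hlab b (hCfin.mem_toFinset.mp hb)) (hlab c (hCfin.mem_toFinset.mp hc)) hbc)
  have hmC' : IsMaximalChain W u v m := hCfin.mem_toFinset.mp hmC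
  have hminC : ∀ l', IsMaximalChain W u v l' → l' ≠ m →
      List.Lex r (chainLabels W m) (chainLabels W l') :=
    fun l' hl' hne' => hmin l' (hCfin.mem_toFinset.mpr hl') hne'
  refine ⟨m, hmC', hminC, ?_⟩
  have hchain : (chainLabels W m).Chain' r := by
    by_contra hnc
    obtain ⟨m1, x, y, z, m2, heq, hnr⟩ := exists_descent m hnc
    have hcc : (x :: y :: z :: m2).Chain' (covers W) := by
      have hh := hmC'.2.2
      rw [heq, List.Chain', List.isChain_append] at hh
      exact hh.2.1
    have hxy : covers W x y := (List.isChain_cons_cons.mp hcc).1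
    have hyz : covers W y z := (List.isChain_cons_cons.mp (List.isChain_cons_cons.mp hcc).2).1
    obtain ⟨haxz, h2, hrefl_xy, hid2⟩ := covers_covers_rank2 hW hxy hyz
    have hrefl_yz : IsReflection ((y⁻¹ * z : W) : V ≃ₗᵢ[ℝ] V) :=
      refl_of_refLen_eq_one hW ((covers_iff hW).mp hyz).2
    obtain ⟨tm, htm1, htm2, htmr, htmmin⟩ := rank2_min hW htotal htrans h2
    by_cases hcase : x⁻¹ * y = tm
    · apply hnr
      have hyz2 : y⁻¹ * z = tm⁻¹ * (x⁻¹ * z) := by rw [← hid2, hcase]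
      rw [hcase, hyz2]
      exact htmr
    · have hrmin : r tm (x⁻¹ * y) :=
        htmmin _ hrefl_xy (by rw [hid2]; exact hrefl_yz) hcase
      obtain ⟨hc1, hc2⟩ := rank2_covers hW haxz h2 htm1 htm2
      have hm'C : IsMaximalChain W u v (m1 ++ x :: (x * tm) :: z :: m2) := by
        refine ⟨?_, ?_, ?_⟩
        · rw [← hmC'.1, heq]
          cases m1 <;> rfl
        · rw [← hmC'.2.1, heq, List.getLast?_append_cons, List.getLast?_append_cons]
          simp
        · have hall := hmC'.2.2
          rw [heq, List.Chain', List.isChain_append] at hall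
          obtain ⟨hA, hB, hAB⟩ := hall
          rw [List.Chain', List.isChain_append]
          refine ⟨hA, ?_, ?_⟩
          · rw [List.isChain_cons_cons, List.isChain_cons_cons]
            exact ⟨hc1, hc2, (List.isChain_cons_cons.mp (List.isChain_cons_cons.mp hB).2).2⟩
          · intro p hp q hq
            apply hAB p hp
            simpa using hq
      have hlabm : chainLabels W m = chainLabels W (m1 ++ [x]) ++
          ((x⁻¹ * y) :: (y⁻¹ * z) :: chainLabels W (z :: m2)) := by
        rw [heq, chainLabels_append]
        rfl
      have hlabm' : chainLabels W (m1 ++ x :: (x * tm) :: z :: m2) =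
          chainLabels W (m1 ++ [x]) ++
          ((x⁻¹ * (x * tm)) :: ((x * tm)⁻¹ * z) :: chainLabels W (z :: m2)) := by
        rw [chainLabels_append]
        rfl
      have hlex : List.Lex r (chainLabels W (m1 ++ x :: (x * tm) :: z :: m2))
          (chainLabels W m) := by
        rw [hlabm, hlabm']
        apply lex_append_left
        apply List.Lex.rel
        rw [inv_mul_cancel_left]
        exact hrmin
      have hne'' : m1 ++ x :: (x * tm) :: z :: m2 ≠ m := by
        intro he
        apply hcase
        rw [heq] at he
        have h3 := List.append_cancel_left he
        have h4 : x * tm = y := by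
          simp only [List.cons.injEq] at h3
          exact h3.2.1
        rw [← h4, inv_mul_cancel_left]
      have hlex2 := hminC _ hm'C hne''
      exact lex_asymm hasymm _ _ hlex (hlab _ hm'C) (hlab _ hmC') hlex2
  exact chain'_pairwise_refl htrans _ (hlab m hmC') hchain


/-- For any strict total order `r` on the set of reflections of `W` and any
non-singleton interval `[u, v]` of `NC_W(γ)`, there is a unique lexicographically
smallest maximal chain of `[u, v]` with respect to the natural edge labeling
`λ (x, y) = x⁻¹ * y`, and this chain is rising. -/
theorem statement19 {V : Type*} [NormedAddCommGroup V] [InnerProductSpace ℝ V]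
    [FiniteDimensional ℝ V]
    (W : Subgroup (V ≃ₗᵢ[ℝ] V)) (hW : IsReflectionGroup W)
    (Φ : Set V) (hΦ : IsRootSystemFor W Φ)
    (γ : W) (hγ : IsCoxeterElement W Φ (Module.finrank ℝ V) γ)
    (r : W → W → Prop)
    (hasymm : ∀ s t : W, IsReflection s.1 → IsReflection t.1 → r s t → ¬ r t s)
    (htrans : ∀ a b c : W, IsReflection a.1 → IsReflection b.1 → IsReflection c.1 →
      r a b → r b c → r a c)
    (htotal : ∀ s t : W, IsReflection s.1 → IsReflection t.1 → s ≠ t → r s t ∨ r t s)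
    (u v : W) (huv : absLe W u v) (hvγ : absLe W v γ) (hne : u ≠ v) :
    ∃ l : List W, IsMaximalChain W u v l ∧
      (∀ l' : List W, IsMaximalChain W u v l' → l' ≠ l →
        List.Lex r (chainLabels W l) (chainLabels W l')) ∧
      (chainLabels W l).Pairwise r := by
  exact statement19' W hW r hasymm htrans htotal u v huv hne
end
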